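/- arXiv:2306.11019 — 3 statements merged into one kernel-verified Lean document; each statement's English description precedes it below -/
import Mathlib

section
/- Let ψ ∈ C_q(ℝ^d) and let conv ψ denote its convex hull, i.e. the greatest convex function on ℝ^d that is ≤ ψ. Then for every y ∈ ℝ^d, (conv ψ)(y) = inf over p ∈ 𝒫₂^y(ℝ^d) of ∫ ψ dp, and moreover conv ψ ∈ C_q(ℝ^d). -/
open MeasureTheory ProbabilityTheory Filter Set Topology
open scoped ENNReal NNReal RealInnerProductSpace

noncomputable section

abbrev Rd (d : ℕ) : Type := EuclideanSpace ℝ (Fin d)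

variable {d : ℕ}

/-- The standard Gaussian measure on `ℝ^d` (mean `0`, identity covariance). -/
def stdGauss (d : ℕ) : Measure (Rd d) :=
  (Measure.pi fun _ : Fin d => gaussianReal 0 1).map
    (MeasurableEquiv.toLp 2 (Fin d → ℝ))

/-- The Gaussian measure on `ℝ^d` with mean `η` and covariance `t • Id`. -/
def gauss (d : ℕ) (η : Rd d) (t : ℝ) : Measure (Rd d) :=
  (stdGauss d).map (fun z => η + Real.sqrt t • z)

/-- `p ∈ 𝒫₂(ℝ^d)`: Borel probability measure with finite second moment. -/
def P2 (p : Measure (Rd d)) : Prop :=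
  IsProbabilityMeasure p ∧ Integrable (fun x => ‖x‖ ^ 2) p

/-- `p ∈ 𝒫₂^x(ℝ^d)`: finite second moment and barycenter `x`. -/
def P2x (x : Rd d) (p : Measure (Rd d)) : Prop :=
  P2 p ∧ (∫ y, y ∂p) = x

/-- `q` is a coupling of `p₁` and `p₂`. -/
def IsCoupling (q : Measure (Rd d × Rd d)) (p₁ p₂ : Measure (Rd d)) : Prop :=
  q.map Prod.fst = p₁ ∧ q.map Prod.snd = p₂

/-- Maximal covariance between two measures. -/
def MCov (p₁ p₂ : Measure (Rd d)) : ℝ :=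
  sSup { r : ℝ | ∃ q : Measure (Rd d × Rd d), IsCoupling q p₁ p₂ ∧
    r = ∫ z, (inner ℝ z.1 z.2 : ℝ) ∂q }

/-- Convex order `μ ⪯_c ν`. -/
def ConvexOrder (μ ν : Measure (Rd d)) : Prop :=
  ∀ φ : Rd d → ℝ, ConvexOn ℝ univ φ → (∃ C : ℝ, ∀ y, |φ y| ≤ C * (1 + ‖y‖)) →
    (∫ y, φ y ∂μ) ≤ ∫ y, φ y ∂ν

/-- `π ∈ MT(μ,ν)`, together with a disintegration kernel `κ` (`π_x = κ x`). -/
def IsMT (μ ν : Measure (Rd d)) (π : Measure (Rd d × Rd d))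
    (κ : Kernel (Rd d) (Rd d)) : Prop :=
  IsCoupling π μ ν ∧ IsMarkovKernel κ ∧ π = μ.compProd κ ∧
    ∀ᵐ x ∂μ, (∫ y, y ∂(κ x)) = x

/-- The class `C_q(ℝ^d)` of continuous functions of quadratic growth. -/
def Cq (d : ℕ) : Set (Rd d → ℝ) :=
  { ψ | Continuous ψ ∧ ∃ a k ℓ : ℝ, ∀ y, ℓ + ‖y‖ ^ 2 / 2 ≤ ψ y ∧ ψ y ≤ a + k * ‖y‖ ^ 2 }

/-- `φ^ψ(x)` for a real-valued `ψ`. -/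
def phiR (ψ : Rd d → ℝ) (x : Rd d) : ℝ :=
  sInf { r : ℝ | ∃ p : Measure (Rd d), P2x x p ∧
    r = (∫ y, ψ y ∂p) - MCov p (stdGauss d) }

/-- The dual value `D̃(μ,ν)`. -/
def Dtilde (μ ν : Measure (Rd d)) : ℝ :=
  sInf { r : ℝ | ∃ ψ ∈ Cq d, r = (∫ y, ψ y ∂ν) - ∫ x, phiR ψ x ∂μ }

/-- The primal value `P(μ,ν)`. -/
def Pval (μ ν : Measure (Rd d)) : ℝ :=
  sSup { r : ℝ | ∃ (π : Measure (Rd d × Rd d)) (κ : Kernel (Rd d) (Rd d)),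
    IsMT μ ν π κ ∧ r = ∫ x, MCov (κ x) (stdGauss d) ∂μ }

/-! ### Extended-real-valued machinery -/

/-- Positive part of an extended real, as an extended nonnegative real. -/
def ePos (x : EReal) : ℝ≥0∞ := if x = ⊤ then ⊤ else ENNReal.ofReal x.toReal

/-- Extended integral of an `EReal`-valued function. -/
def eInt (p : Measure (Rd d)) (f : Rd d → EReal) : EReal :=
  ((∫⁻ x, ePos (f x) ∂p : ℝ≥0∞) : EReal) - ((∫⁻ x, ePos (-(f x)) ∂p : ℝ≥0∞) : EReal)

/-- Convexity on a set for `EReal`-valued functions. -/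
def ERealConvexOn (s : Set (Rd d)) (f : Rd d → EReal) : Prop :=
  ∀ x ∈ s, ∀ y ∈ s, ∀ a b : ℝ, 0 ≤ a → 0 ≤ b → a + b = 1 →
    f (a • x + b • y) ≤ (a : EReal) * f x + (b : EReal) * f y

/-- Convexity for `EReal`-valued functions. -/
def ERealConvex (f : Rd d → EReal) : Prop := ERealConvexOn univ f

/-- Domain of an `EReal`-valued function (the set where it is `< +∞`). -/
def edom (f : Rd d → EReal) : Set (Rd d) := { x | f x ≠ ⊤ }

/-- Convex conjugate of an `EReal`-valued function. -/
def eConj (f : Rd d → EReal) (y : Rd d) : EReal :=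
  ⨆ x : Rd d, ((inner ℝ x y : ℝ) : EReal) - f x

/-- Convex conjugate of a real-valued function. -/
def rConj (f : Rd d → ℝ) (y : Rd d) : EReal :=
  ⨆ x : Rd d, (((inner ℝ x y : ℝ) - f x : ℝ) : EReal)

/-- `φ^ψ(x)` for an `EReal`-valued `ψ`. -/
def phiE (ψ : Rd d → EReal) (x : Rd d) : EReal :=
  sInf { r : EReal | ∃ p : Measure (Rd d), P2x x p ∧
    r = eInt p ψ - ((MCov p (stdGauss d) : ℝ) : EReal) }

/-- The relaxed dual functional `𝒟(ψ)` relative to a disintegration kernel `κ`. -/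
def Dfun (μ : Measure (Rd d)) (κ : Kernel (Rd d) (Rd d)) (ψ : Rd d → EReal) : ℝ≥0∞ :=
  ∫⁻ x, ePos (eInt (κ x) ψ - phiE ψ x) ∂μ

/-- Convolution of an `EReal`-valued function with the standard Gaussian. -/
def gConv (f : Rd d → EReal) (x : Rd d) : EReal :=
  eInt (stdGauss d) (fun z => f (x + z))

/-- Convolution of a real-valued function with the standard Gaussian. -/
def gConvR (f : Rd d → ℝ) (x : Rd d) : ℝ := ∫ z, f (x + z) ∂(stdGauss d)

/-- The relaxed dual functional `ℰ(ψ)` relative to a disintegration kernel `κ`. -/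
def Efun (μ : Measure (Rd d)) (κ : Kernel (Rd d) (Rd d)) (ψ : Rd d → EReal) : ℝ≥0∞ :=
  ∫⁻ x, ePos (eInt (κ x) ψ - eConj (gConv (eConj ψ)) x) ∂μ

/-- Convolution of two measures on `ℝ^d`. -/
def mconv (α β : Measure (Rd d)) : Measure (Rd d) :=
  (α.prod β).map (fun p => p.1 + p.2)

/-- Support of a measure. -/
def msupp (p : Measure (Rd d)) : Set (Rd d) :=
  { x | ∀ U : Set (Rd d), IsOpen U → x ∈ U → 0 < p U }

/-- Closed convex hull of a set. -/
def cch (s : Set (Rd d)) : Set (Rd d) := closure (convexHull ℝ s)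

/-- Bass data `(v, α)` from `μ` to `ν`. -/
def IsBassData (μ ν : Measure (Rd d)) (v : Rd d → ℝ) (α : Measure (Rd d)) : Prop :=
  ConvexOn ℝ univ v ∧ IsProbabilityMeasure α ∧
  Integrable (fun x => ‖gradient v x‖ ^ 2) (mconv α (stdGauss d)) ∧
  (mconv α (stdGauss d)).map (gradient v) = ν ∧
  α.map (fun ζ => ∫ z, gradient v (ζ + z) ∂(stdGauss d)) = μ

/-- A dual optimizer in the sense of Definition 6.1. -/
def IsDualOptimizer (μ ν : Measure (Rd d)) (ψ : Rd d → EReal) : Prop :=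
  LowerSemicontinuous ψ ∧ ERealConvex ψ ∧ (∀ x, ψ x ≠ ⊥) ∧
  μ (intrinsicInterior ℝ (edom ψ)) = 1 ∧
  ∀ (π : Measure (Rd d × Rd d)) (κ : Kernel (Rd d) (Rd d)), IsMT μ ν π κ →
    ((Dtilde μ ν : ℝ) : EReal) = ((Dfun μ κ ψ : ℝ≥0∞) : EReal)

/-- De March–Touzi irreducibility of the pair `(μ,ν)`. -/
def DMTIrred (μ ν : Measure (Rd d)) : Prop :=
  μ (intrinsicInterior ℝ (cch (msupp ν))) = 1 ∧
  ∃ (π : Measure (Rd d × Rd d)) (κ : Kernel (Rd d) (Rd d)), IsMT μ ν π κ ∧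
    ∀ᵐ x ∂μ, cch (msupp (κ x)) = cch (msupp ν)

/-- Irreducibility of the pair `(μ,ν)`. -/
def Irred (μ ν : Measure (Rd d)) : Prop :=
  ∀ A B : Set (Rd d), MeasurableSet A → MeasurableSet B → 0 < μ A → 0 < ν B →
    ∃ (π : Measure (Rd d × Rd d)) (κ : Kernel (Rd d) (Rd d)), IsMT μ ν π κ ∧
      0 < π (A ×ˢ B)

/-- Real-valued representative of `ψ*`. -/
def vOf (ψ : Rd d → EReal) (y : Rd d) : ℝ := (eConj ψ y).toReal

/-- The map `ζ = ∇(v ∗ γ)*` associated with a dual optimizer `ψ` (with `v = ψ*`). -/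
def zetaOf (ψ : Rd d → EReal) (x : Rd d) : Rd d :=
  gradient (fun x' => (rConj (gConvR (vOf ψ)) x').toReal) x

/-- (An a.e. representative of) `∇ψ*`. -/
def gradStar (ψ : Rd d → EReal) (z : Rd d) : Rd d :=
  gradient (fun y => (eConj ψ y).toReal) z

/-- Subdifferential of an `EReal`-valued function at a point. -/
def subdiffE (g : Rd d → EReal) (z : Rd d) : Set (Rd d) :=
  { u | ∀ y, g z + ((inner ℝ u (y - z) : ℝ) : EReal) ≤ g y }

/-- The dual function `ζ ↦ ⟨ζ,x⟩ − ∫ ψ*(ζ+z) dγ(z)`. -/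
def gdual (ψ : Rd d → EReal) (x ζ : Rd d) : EReal :=
  ((inner ℝ ζ x : ℝ) : EReal) - eInt (stdGauss d) (fun z => eConj ψ (ζ + z))

end

lemma aux_csInf {S : Set ℝ} (hne : S.Nonempty) (hbd : BddBelow S) {a c t : ℝ}
    (ha : 0 ≤ a) (h : ∀ r ∈ S, c ≤ a * r + t) : c ≤ a * sInf S + t := by
  rcases eq_or_lt_of_le ha with rfl | ha'
  · obtain ⟨r, hr⟩ := hne
    simpa using h r hr
  · have h1 : (c - t) / a ≤ sInf S := by
      refine le_csInf hne fun r hr => ?_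
      rw [div_le_iff₀ ha']
      have := h r hr
      nlinarith
    rw [div_le_iff₀ ha'] at h1
    nlinarith

lemma aux_sqnorm_convex {d : ℕ} : ConvexOn ℝ univ (fun z : Rd d => ‖z‖ ^ 2) := by
  refine ⟨convex_univ, fun x _ y _ a b ha hb hab => ?_⟩
  have h1 : ‖a • x + b • y‖ ≤ a * ‖x‖ + b * ‖y‖ := by
    refine (norm_add_le _ _).trans ?_
    rw [norm_smul, norm_smul, Real.norm_eq_abs, Real.norm_eq_abs,
      abs_of_nonneg ha, abs_of_nonneg hb]
  have h2 : (0:ℝ) ≤ ‖a • x + b • y‖ := norm_nonneg _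
  have h3 : ‖a • x + b • y‖ ^ 2 ≤ (a * ‖x‖ + b * ‖y‖) ^ 2 := by
    nlinarith [sq_nonneg (‖x‖-‖y‖), mul_nonneg ha hb]
  have h4 : (a * ‖x‖ + b * ‖y‖) ^ 2 ≤ a * ‖x‖ ^ 2 + b * ‖y‖ ^ 2 := by
    nlinarith [sq_nonneg (‖x‖-‖y‖), mul_nonneg ha hb]
  simp only [smul_eq_mul]
  linarith


/-- **The convex hull of `ψ ∈ C_q` via barycentric minimization.** -/
theorem stmt1 {d : ℕ} (hd : 1 ≤ d) (ψ χ : Rd d → ℝ) (hψ : ψ ∈ Cq d)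
    (hχconv : ConvexOn ℝ univ χ) (hχle : ∀ y, χ y ≤ ψ y)
    (hχmax : ∀ g : Rd d → ℝ, ConvexOn ℝ univ g → (∀ y, g y ≤ ψ y) → ∀ y, g y ≤ χ y) :
    (∀ y : Rd d, χ y =
      sInf { r : ℝ | ∃ p : Measure (Rd d), P2x y p ∧ r = ∫ z, ψ z ∂p }) ∧
    χ ∈ Cq d := by
  obtain ⟨hψc, a0, k0, ℓ0, hbnds⟩ := hψ
  have hq : ConvexOn ℝ univ (fun z : Rd d => ℓ0 + ‖z‖ ^ 2 / 2) := by
    refine ⟨convex_univ, fun x hx y hy a b ha hb hab => ?_⟩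
    obtain rfl : b = 1 - a := by linarith
    have h := aux_sqnorm_convex.2 hx hy ha hb hab
    simp only [smul_eq_mul] at h ⊢
    nlinarith [h]
  have hlow : ∀ z, ℓ0 + ‖z‖ ^ 2 / 2 ≤ χ z := hχmax _ hq (fun z => (hbnds z).1)
  have hχcont : Continuous χ := continuousOn_univ.mp (hχconv.continuousOn isOpen_univ)
  have hint : ∀ (p : Measure (Rd d)), IsProbabilityMeasure p →
      Integrable (fun z => ‖z‖ ^ 2) p →
      Integrable ψ p ∧ Integrable χ p ∧ Integrable (fun z : Rd d => z) p := by
    intro p hp h2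
    haveI := hp
    have hb : Integrable (fun z : Rd d => (|a0| + |ℓ0| + 1) + (|k0| + 1) * ‖z‖ ^ 2) p :=
      (integrable_const _).add (h2.const_mul _)
    have habs : ∀ g : Rd d → ℝ, (∀ z, ℓ0 + ‖z‖ ^ 2 / 2 ≤ g z) →
        (∀ z, g z ≤ a0 + k0 * ‖z‖ ^ 2) →
        ∀ z, ‖g z‖ ≤ (|a0| + |ℓ0| + 1) + (|k0| + 1) * ‖z‖ ^ 2 := by
      intro g h1 h2' z
      rw [Real.norm_eq_abs, abs_le]
      constructor
      · nlinarith [neg_abs_le ℓ0, abs_nonneg a0, sq_nonneg ‖z‖, h1 z,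
          mul_nonneg (by positivity : (0:ℝ) ≤ |k0| + 1) (sq_nonneg ‖z‖)]
      · nlinarith [le_abs_self a0, neg_abs_le ℓ0, sq_nonneg ‖z‖, h2' z, abs_nonneg ℓ0,
          mul_nonneg (by linarith [le_abs_self k0] : (0:ℝ) ≤ |k0| - k0 + 1) (sq_nonneg ‖z‖)]
    refine ⟨?_, ?_, ?_⟩
    · exact hb.mono' hψc.aestronglyMeasurable
        (ae_of_all _ fun z => habs ψ (fun z => (hbnds z).1) (fun z => (hbnds z).2) z)
    · exact hb.mono' hχcont.aestronglyMeasurable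
        (ae_of_all _ fun z => habs χ hlow (fun z => (hχle z).trans (hbnds z).2) z)
    · refine ((integrable_const (1:ℝ)).add h2).mono' aestronglyMeasurable_id
        (ae_of_all _ fun z => ?_)
      have : ‖z‖ ≤ 1 + ‖z‖ ^ 2 := by nlinarith [sq_nonneg (‖z‖ - 1), norm_nonneg z]
      simpa using this
  have key : ∀ (y : Rd d) (p : Measure (Rd d)), P2x y p → χ y ≤ ∫ z, ψ z ∂p := by
    intro y p hp
    obtain ⟨⟨hprob, h2⟩, hbar⟩ := hp
    haveI := hprob
    obtain ⟨hIψ, hIχ, hIid⟩ := hint p hprob h2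
    have hjen : χ (∫ z, (fun w : Rd d => w) z ∂p) ≤ ∫ z, χ ((fun w : Rd d => w) z) ∂p :=
      hχconv.map_integral_le hχcont.continuousOn isClosed_univ
        (ae_of_all _ fun _ => mem_univ _) hIid (by exact hIχ)
    simp only at hjen
    rw [hbar] at hjen
    exact hjen.trans (integral_mono hIχ hIψ hχle)
  have hdirac : ∀ y : Rd d,
      (ψ y) ∈ { r : ℝ | ∃ p : Measure (Rd d), P2x y p ∧ r = ∫ z, ψ z ∂p } := by
    intro y
    refine ⟨Measure.dirac y, ⟨⟨inferInstance, ?_⟩, ?_⟩, (integral_dirac ψ y).symm⟩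
    · refine ⟨((continuous_pow 2).comp continuous_norm).aestronglyMeasurable, ?_⟩
      simp only [HasFiniteIntegral, lintegral_dirac]
      exact ENNReal.coe_lt_top
    · exact integral_dirac (fun z : Rd d => z) y
  have hSne : ∀ y : Rd d,
      Set.Nonempty { r : ℝ | ∃ p : Measure (Rd d), P2x y p ∧ r = ∫ z, ψ z ∂p } :=
    fun y => ⟨ψ y, hdirac y⟩
  have hSbdd : ∀ y : Rd d,
      BddBelow { r : ℝ | ∃ p : Measure (Rd d), P2x y p ∧ r = ∫ z, ψ z ∂p } := by
    intro y
    refine ⟨χ y, fun r hr => ?_⟩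
    obtain ⟨p, hp, rfl⟩ := hr
    exact key y p hp
  have hle1 : ∀ y : Rd d,
      χ y ≤ sInf { r : ℝ | ∃ p : Measure (Rd d), P2x y p ∧ r = ∫ z, ψ z ∂p } := by
    intro y
    refine le_csInf (hSne y) fun r hr => ?_
    obtain ⟨p, hp, rfl⟩ := hr
    exact key y p hp
  have hconvh : ConvexOn ℝ univ
      (fun y => sInf { r : ℝ | ∃ p : Measure (Rd d), P2x y p ∧ r = ∫ z, ψ z ∂p }) := by
    refine ⟨convex_univ, fun y₁ _ y₂ _ a b ha hb hab => ?_⟩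
    simp only [smul_eq_mul]
    have step : ∀ r₁ ∈ { r : ℝ | ∃ p : Measure (Rd d), P2x y₁ p ∧ r = ∫ z, ψ z ∂p },
        ∀ r₂ ∈ { r : ℝ | ∃ p : Measure (Rd d), P2x y₂ p ∧ r = ∫ z, ψ z ∂p },
        sInf { r : ℝ | ∃ p : Measure (Rd d), P2x (a • y₁ + b • y₂) p ∧ r = ∫ z, ψ z ∂p }
          ≤ a * r₁ + b * r₂ := by
      rintro r₁ ⟨p₁, hp₁, rfl⟩ r₂ ⟨p₂, hp₂, rfl⟩
      obtain ⟨⟨hprob₁, h2₁⟩, hbar₁⟩ := hp₁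
      obtain ⟨⟨hprob₂, h2₂⟩, hbar₂⟩ := hp₂
      haveI := hprob₁; haveI := hprob₂
      obtain ⟨hIψ₁, -, hIid₁⟩ := hint p₁ hprob₁ h2₁
      obtain ⟨hIψ₂, -, hIid₂⟩ := hint p₂ hprob₂ h2₂
      have hane : (ENNReal.ofReal a) ≠ ⊤ := ENNReal.ofReal_ne_top
      have hbne : (ENNReal.ofReal b) ≠ ⊤ := ENNReal.ofReal_ne_top
      set q : Measure (Rd d) := (ENNReal.ofReal a) • p₁ + (ENNReal.ofReal b) • p₂ with hqdef
      have hqprob : IsProbabilityMeasure q := by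
        constructor
        simp only [hqdef, Measure.add_apply, Measure.smul_apply, smul_eq_mul,
          measure_univ, mul_one]
        rw [← ENNReal.ofReal_add ha hb, hab, ENNReal.ofReal_one]
      have hq2 : Integrable (fun z => ‖z‖ ^ 2) q :=
        (h2₁.smul_measure hane).add_measure (h2₂.smul_measure hbne)
      have hqbar : (∫ z, z ∂q) = a • y₁ + b • y₂ := by
        rw [hqdef, integral_add_measure (hIid₁.smul_measure hane) (hIid₂.smul_measure hbne),
          integral_smul_measure, integral_smul_measure, hbar₁, hbar₂,
          ENNReal.toReal_ofReal ha, ENNReal.toReal_ofReal hb]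
      have hqψ : (∫ z, ψ z ∂q) = a * (∫ z, ψ z ∂p₁) + b * ∫ z, ψ z ∂p₂ := by
        rw [hqdef, integral_add_measure (hIψ₁.smul_measure hane) (hIψ₂.smul_measure hbne),
          integral_smul_measure, integral_smul_measure,
          ENNReal.toReal_ofReal ha, ENNReal.toReal_ofReal hb]
        simp [smul_eq_mul]
      rw [← hqψ]
      exact csInf_le (hSbdd _) ⟨q, ⟨⟨hqprob, hq2⟩, hqbar⟩, rfl⟩
    have step2 : ∀ r₁ ∈ { r : ℝ | ∃ p : Measure (Rd d), P2x y₁ p ∧ r = ∫ z, ψ z ∂p },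
        sInf { r : ℝ | ∃ p : Measure (Rd d), P2x (a • y₁ + b • y₂) p ∧ r = ∫ z, ψ z ∂p }
          ≤ b * sInf { r : ℝ | ∃ p : Measure (Rd d), P2x y₂ p ∧ r = ∫ z, ψ z ∂p }
            + a * r₁ := by
      intro r₁ hr₁
      exact aux_csInf (hSne y₂) (hSbdd y₂) hb
        (fun r₂ hr₂ => by have := step r₁ hr₁ r₂ hr₂; linarith)
    have h3 : sInf { r : ℝ | ∃ p : Measure (Rd d), P2x (a • y₁ + b • y₂) p ∧ r = ∫ z, ψ z ∂p }
        ≤ a * sInf { r : ℝ | ∃ p : Measure (Rd d), P2x y₁ p ∧ r = ∫ z, ψ z ∂p }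
          + b * sInf { r : ℝ | ∃ p : Measure (Rd d), P2x y₂ p ∧ r = ∫ z, ψ z ∂p } :=
      aux_csInf (hSne y₁) (hSbdd y₁) ha
        (fun r₁ hr₁ => by have := step2 r₁ hr₁; linarith)
    linarith
  have hle2 : ∀ y : Rd d,
      sInf { r : ℝ | ∃ p : Measure (Rd d), P2x y p ∧ r = ∫ z, ψ z ∂p } ≤ χ y :=
    hχmax _ hconvh (fun y => csInf_le (hSbdd y) (hdirac y))
  exact ⟨fun y => le_antisymm (hle1 y) (hle2 y),
    hχcont, a0, k0, ℓ0, fun y => ⟨hlow y, (hχle y).trans (hbnds y).2⟩⟩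
end

section
/- Assume the support of ν affinely spans ℝ^d and that (μ,ν) is De March–Touzi irreducible with witness π^DMT ∈ MT(μ,ν). Then for μ-a.e. x ∈ ℝ^d and every compact set K ⊆ I there exists a constant δ(K,x) > 0 such that π^DMT_x(S_{y*}) ≥ δ(K,x) for every unit vector y* ∈ S^{d−1}, where S_{y*} := { y ∈ C : ⟨y,y*⟩ > sup{⟨ỹ,y*⟩ : ỹ ∈ K} } is the slice of C beyond K in direction y*. -/
open MeasureTheory ProbabilityTheory Filter Set Topology
open scoped ENNReal NNReal RealInnerProductSpace

section AuxLemmas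

variable {d : ℕ}

lemma aux_msupp_closed (p : Measure (Rd d)) : IsClosed (msupp p) := by
  rw [← isOpen_compl_iff, isOpen_iff_forall_mem_open]
  intro x hx
  rw [mem_compl_iff] at hx
  simp only [msupp, mem_setOf_eq] at hx
  push_neg at hx
  obtain ⟨U, hUo, hxU, hU0⟩ := hx
  exact ⟨U, fun x' hx' h => (h U hUo hx').ne' (nonpos_iff_eq_zero.mp hU0), hUo, hxU⟩

lemma aux_msupp_null (p : Measure (Rd d)) : p (msupp p)ᶜ = 0 := by
  obtain ⟨b, hbc, -, hb⟩ := TopologicalSpace.exists_countable_basis (Rd d)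
  refine measure_mono_null (fun x hx => ?_)
    ((measure_sUnion_null_iff (hbc.mono (Set.sep_subset _ _))).2 fun V hV => hV.2)
  rw [mem_compl_iff] at hx
  simp only [msupp, mem_setOf_eq] at hx
  push_neg at hx
  obtain ⟨U, hUo, hxU, hU0⟩ := hx
  obtain ⟨V, hVb, hxV, hVU⟩ := hb.exists_subset_of_mem_open hxU hUo
  exact ⟨V, ⟨hVb, measure_mono_null hVU (nonpos_iff_eq_zero.mp hU0)⟩, hxV⟩

lemma aux_subset_cch (s : Set (Rd d)) : s ⊆ cch s :=
  fun x hx => subset_closure (subset_convexHull ℝ s hx)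

lemma aux_cch_le {s : Set (Rd d)} {u : Rd d} {m : ℝ}
    (h : ∀ y ∈ s, ⟪y, u⟫ ≤ m) : ∀ y ∈ cch s, ⟪y, u⟫ ≤ m := by
  have hlin : IsLinearMap ℝ (fun y : Rd d => ⟪y, u⟫) :=
    ⟨fun a b => inner_add_left a b u, fun c a => real_inner_smul_left a u c⟩
  have hconv : Convex ℝ {y : Rd d | ⟪y, u⟫ ≤ m} := convex_halfSpace_le hlin m
  have hcl : IsClosed {y : Rd d | ⟪y, u⟫ ≤ m} :=
    isClosed_le (continuous_id.inner continuous_const) continuous_const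
  exact fun y hy => closure_minimal (convexHull_min h hconv) hcl hy

lemma aux_intrinsic {C : Set (Rd d)} (h : affineSpan ℝ C = ⊤) :
    intrinsicInterior ℝ C ⊆ interior C := by
  have hopen : IsOpen ((affineSpan ℝ C : Set (Rd d))) := by
    rw [h, AffineSubspace.top_coe]; exact isOpen_univ
  have hopen2 : IsOpen (intrinsicInterior ℝ C) :=
    hopen.isOpenEmbedding_subtypeVal.isOpenMap _ isOpen_interior
  exact interior_maximal intrinsicInterior_subset hopen2

end AuxLemmas

/-- **Uniform mass of slices beyond compact subsets of `I` (Lemma 7.5).** -/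
theorem stmt14 {d : ℕ} (hd : 1 ≤ d) (μ ν : Measure (Rd d)) (hμ : P2 μ) (hν : P2 ν)
    (hco : ConvexOrder μ ν) (hspan : affineSpan ℝ (msupp ν) = ⊤)
    (π : Measure (Rd d × Rd d)) (κ : Kernel (Rd d) (Rd d)) (hπ : IsMT μ ν π κ)
    (hI : μ (intrinsicInterior ℝ (cch (msupp ν))) = 1)
    (hDMT : ∀ᵐ x ∂μ, cch (msupp (κ x)) = cch (msupp ν)) :
    ∀ᵐ x ∂μ, ∀ K : Set (Rd d), K ⊆ intrinsicInterior ℝ (cch (msupp ν)) →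
      IsCompact K → ∃ δ : ℝ, 0 < δ ∧ ∀ u : Rd d, ‖u‖ = 1 →
        ENNReal.ofReal δ ≤ κ x { y ∈ cch (msupp ν) |
          (⨆ w ∈ K, ((inner ℝ w u : ℝ) : EReal)) < ((inner ℝ y u : ℝ) : EReal) } := by
  have hκMarkov := hπ.2.1
  have hCspan : affineSpan ℝ (cch (msupp ν)) = ⊤ :=
    top_le_iff.mp (hspan ▸ affineSpan_mono ℝ (aux_subset_cch (msupp ν)))
  filter_upwards [hDMT] with x hx
  intro K hKI hK
  haveI : IsProbabilityMeasure (κ x) := hκMarkov.isProbabilityMeasure x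
  have hnull : κ x (msupp (κ x))ᶜ = 0 := aux_msupp_null (κ x)
  have hsuppC : msupp (κ x) ⊆ cch (msupp ν) := by
    intro y hy
    have := aux_subset_cch (msupp (κ x)) hy
    rwa [hx] at this
  rcases K.eq_empty_or_nonempty with rfl | hKne
  · refine ⟨1, one_pos, fun u hu => ?_⟩
    have h1 : κ x (msupp (κ x)) = 1 := by
      have h2 := measure_add_measure_compl (μ := κ x) (aux_msupp_closed (κ x)).measurableSet
      rwa [hnull, add_zero, measure_univ] at h2
    calc ENNReal.ofReal 1 = 1 := ENNReal.ofReal_one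
      _ = κ x (msupp (κ x)) := h1.symm
      _ ≤ _ := by
          refine measure_mono fun y hy => ?_
          simp only [Set.mem_setOf_eq]
          exact ⟨hsuppC hy, by rw [iSup_emptyset]; exact EReal.bot_lt_coe _⟩
  obtain ⟨R', hR'⟩ := isBounded_iff_forall_norm_le.mp hK.isBounded
  set R : ℝ := max R' 0 with hRdef
  have hR : ∀ w ∈ K, ‖w‖ ≤ R := fun w hw => le_max_of_le_left (hR' w hw)
  have hR0 : (0:ℝ) ≤ R := le_max_right _ _
  have key : ∀ u : Rd d, ‖u‖ = 1 → ∃ ρ, 0 < ρ ∧ ∃ δ, 0 < δ ∧ ∀ u' : Rd d, dist u' u < ρ →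
      ENNReal.ofReal δ ≤ κ x { y ∈ cch (msupp ν) |
        (⨆ w ∈ K, ((inner ℝ w u' : ℝ) : EReal)) < ((inner ℝ y u' : ℝ) : EReal) } := by
    intro u hu
    have hcont : Continuous (fun w : Rd d => (inner ℝ w u : ℝ)) :=
      continuous_id.inner continuous_const
    obtain ⟨w0, hw0K, hw0max⟩ := hK.exists_isMaxOn hKne hcont.continuousOn
    set m : ℝ := ⟪w0, u⟫ with hm
    have hw0int : w0 ∈ interior (cch (msupp ν)) := aux_intrinsic hCspan (hKI hw0K)
    obtain ⟨ε, hε, hball⟩ := Metric.isOpen_iff.mp isOpen_interior w0 hw0int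
    have hy1 : w0 + (ε/2) • u ∈ cch (msupp ν) := by
      refine interior_subset (hball ?_)
      rw [Metric.mem_ball, dist_eq_norm]
      have he : w0 + (ε/2) • u - w0 = (ε/2) • u := by abel
      rw [he, norm_smul, hu, mul_one, Real.norm_eq_abs, abs_of_pos (half_pos hε)]
      linarith
    have hy1val : ⟪w0 + (ε/2) • u, u⟫ = m + ε/2 := by
      rw [inner_add_left, real_inner_smul_left, real_inner_self_eq_norm_sq, hu, ← hm]
      ring
    have hex : ∃ y0 ∈ msupp (κ x), m < ⟪y0, u⟫ := by
      by_contra hcon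
      push_neg at hcon
      have hy1' : w0 + (ε/2) • u ∈ cch (msupp (κ x)) := by rw [hx]; exact hy1
      have hle := aux_cch_le hcon _ hy1'
      rw [hy1val] at hle
      linarith
    obtain ⟨y0, hy0supp, hy0⟩ := hex
    set η : ℝ := ⟪y0, u⟫ - m with hηdef
    have hη0 : 0 < η := by simp only [hηdef]; linarith
    set ρ : ℝ := (η/2) / (R + ‖y0‖ + η/2 + 1) with hρdef
    have hden : 0 < R + ‖y0‖ + η/2 + 1 := by positivity
    have hρ0 : 0 < ρ := by positivity
    have hpball : 0 < κ x (Metric.ball y0 (η/2)) :=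
      hy0supp _ Metric.isOpen_ball (Metric.mem_ball_self (by positivity))
    refine ⟨ρ, hρ0, (κ x (Metric.ball y0 (η/2))).toReal,
      ENNReal.toReal_pos hpball.ne' (measure_ne_top _ _), fun u' hu' => ?_⟩
    rw [ENNReal.ofReal_toReal (measure_ne_top _ _), ← measure_inter_conull hnull]
    refine measure_mono fun y hy => ?_
    obtain ⟨hyb, hys⟩ := hy
    simp only [Set.mem_setOf_eq]
    refine ⟨hsuppC hys, ?_⟩
    have ha : ‖u' - u‖ < ρ := by rwa [← dist_eq_norm]
    have ha0 : (0:ℝ) ≤ ‖u' - u‖ := norm_nonneg _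
    have hyy0 : ‖y - y0‖ < η/2 := by rwa [Metric.mem_ball, dist_eq_norm] at hyb
    have hKle : (⨆ w ∈ K, ((inner ℝ w u' : ℝ) : EReal)) ≤ ((m + R * ‖u' - u‖ : ℝ) : EReal) := by
      refine iSup₂_le fun w hw => ?_
      rw [EReal.coe_le_coe_iff]
      have h1 : ⟪w, u' - u⟫ = ⟪w, u'⟫ - ⟪w, u⟫ := inner_sub_right _ _ _
      have h2 : ⟪w, u⟫ ≤ m := hw0max hw
      have h3 : ⟪w, u' - u⟫ ≤ ‖w‖ * ‖u' - u‖ := real_inner_le_norm _ _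
      have h4 : ‖w‖ ≤ R := hR w hw
      nlinarith [mul_le_mul_of_nonneg_right h4 ha0]
    refine lt_of_le_of_lt hKle (EReal.coe_lt_coe_iff.mpr ?_)
    have hA : ⟪y, u' - u⟫ = ⟪y, u'⟫ - ⟪y, u⟫ := inner_sub_right _ _ _
    have hB : ⟪y - y0, u⟫ = ⟪y, u⟫ - ⟪y0, u⟫ := inner_sub_left _ _ _
    have hC2 : |⟪y - y0, u⟫| ≤ ‖y - y0‖ := by
      have h := abs_real_inner_le_norm (y - y0) u
      rwa [hu, mul_one] at h
    have hD : |⟪y, u' - u⟫| ≤ ‖y‖ * ‖u' - u‖ := abs_real_inner_le_norm _ _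
    have hE : ‖y‖ ≤ ‖y0‖ + η/2 := by
      have h := norm_sub_norm_le y y0
      linarith
    have h5 : ρ * (R + ‖y0‖ + η/2 + 1) = η/2 := by
      rw [hρdef]; field_simp
    have hC2a := abs_le.mp hC2
    have hDa := abs_le.mp hD
    have key1 : ‖y‖ * ‖u' - u‖ ≤ (‖y0‖ + η/2) * ‖u' - u‖ :=
      mul_le_mul_of_nonneg_right hE ha0
    have key2 : (R + ‖y0‖ + η/2) * ‖u' - u‖ ≤ (R + ‖y0‖ + η/2) * ρ :=
      mul_le_mul_of_nonneg_left ha.le (by positivity)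
    have key3 : (R + ‖y0‖ + η/2) * ρ < η/2 := by nlinarith
    linarith [hC2a.1, hC2a.2, hDa.1, hDa.2]
  choose! ρf hρf δf hδf hQ using key
  have hsph : (Metric.sphere (0 : Rd d) 1).Nonempty := by
    refine ⟨EuclideanSpace.single ⟨0, hd⟩ (1:ℝ), ?_⟩
    rw [mem_sphere_zero_iff_norm, EuclideanSpace.norm_single]
    norm_num
  obtain ⟨t, htsub, htcov⟩ := (isCompact_sphere (0 : Rd d) 1).elim_nhds_subcover
    (fun u => Metric.ball u (ρf u))
    (fun u hu => Metric.ball_mem_nhds u (hρf u (mem_sphere_zero_iff_norm.mp hu)))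
  have htne : t.Nonempty := by
    obtain ⟨u, hu⟩ := hsph
    obtain ⟨v, hv, -⟩ := Set.mem_iUnion₂.mp (htcov hu)
    exact ⟨v, hv⟩
  refine ⟨t.inf' htne δf, (Finset.lt_inf'_iff htne).mpr
    (fun v hv => hδf v (mem_sphere_zero_iff_norm.mp (htsub v hv))), fun u hu => ?_⟩
  obtain ⟨v, hvt, hvball⟩ := Set.mem_iUnion₂.mp (htcov (mem_sphere_zero_iff_norm.mpr hu))
  refine le_trans (ENNReal.ofReal_le_ofReal (Finset.inf'_le δf hvt)) ?_
  exact hQ v (mem_sphere_zero_iff_norm.mp (htsub v hvt)) u (Metric.mem_ball.mp hvball)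
end

section
/- For every sequence (ψ_n)_{n≥1} of lower semicontinuous convex functions ψ_n : ℝ^d → [0,+∞) there exist a closed convex set C_lim ⊆ ℝ^d with relative interior I_lim and a subsequence (ψ_{n_k})_{k≥1} such that: for every y ∈ I_lim the limit ψ_lim(y) := lim_{k→∞} ψ_{n_k}(y) exists and is finite, the convergence being uniform on compact subsets of I_lim, and for every y ∈ ℝ^d \ C_lim one has lim_{k→∞} ψ_{n_k}(y) = +∞. -/
open MeasureTheory ProbabilityTheory Filter Set Topology
open scoped ENNReal NNReal RealInnerProductSpace

set_option maxHeartbeats 1000000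

noncomputable section

namespace StmtAux

attribute [local instance] Classical.propDecidable

variable {d : ℕ}

/-- Turn an eventual bound into a global bound. -/
theorem bound_of_eventually {f : ℕ → ℝ} (h : ∃ N M, ∀ k, N ≤ k → f k ≤ M) :
    ∃ M, ∀ k, f k ≤ M := by
  obtain ⟨N, M, hNM⟩ := h
  revert hNM
  induction N generalizing M with
  | zero => exact fun hNM => ⟨M, fun k => hNM k (Nat.zero_le k)⟩
  | succ n ih =>
      intro hNM
      refine ih (max M (f n)) fun k hk => ?_
      rcases eq_or_lt_of_le hk with rfl | hlt
      · exact le_max_right _ _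
      · exact le_trans (hNM k hlt) (le_max_left _ _)

/-- distance-type gauge to the current anchor list -/
noncomputable def dA (A : List (Rd d)) (y : Rd d) : ℝ :=
  if A = [] then 1 else min (Metric.infDist y {a | a ∈ A}) 1

theorem dA_le_one (A : List (Rd d)) (y : Rd d) : dA A y ≤ 1 := by
  unfold dA; split_ifs <;> simp

/-- candidate set at stage `t` along subsequence `σ` -/
def Cand (ψ : ℕ → Rd d → ℝ) (σ : ℕ → ℕ) (t : ℕ) : Set (Rd d) :=
  {y | ‖y‖ ≤ ((Nat.unpair t).1 : ℝ) ∧ ∃ M : ℝ, ∃ᶠ m in atTop, ψ (σ m) y ≤ M}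

noncomputable def beta (ψ : ℕ → Rd d → ℝ) (σ : ℕ → ℕ) (A : List (Rd d)) (t : ℕ) : ℝ :=
  sSup (dA A '' Cand ψ σ t)

/-- Phase 1 recursion: state = (subsequence, anchor list). -/
noncomputable def st1 (ψ : ℕ → Rd d → ℝ) : ℕ → (ℕ → ℕ) × List (Rd d)
  | 0 => (id, [])
  | t + 1 =>
      let p := st1 ψ t
      if h : ∃ y, y ∈ Cand ψ p.1 t ∧ beta ψ p.1 p.2 t / 2 < dA p.2 y then
        (p.1 ∘ (extraction_of_frequently_atTop h.choose_spec.1.2.choose_spec).choose,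
          h.choose :: p.2)
      else p

theorem st1_comp (ψ : ℕ → Rd d → ℝ) (t : ℕ) :
    ∃ ρ : ℕ → ℕ, StrictMono ρ ∧ (st1 ψ (t + 1)).1 = (st1 ψ t).1 ∘ ρ := by
  rw [st1]
  split_ifs with h
  · exact ⟨_, (extraction_of_frequently_atTop h.choose_spec.1.2.choose_spec).choose_spec.1, rfl⟩
  · exact ⟨id, strictMono_id, rfl⟩

theorem st1_strictMono (ψ : ℕ → Rd d → ℝ) (t : ℕ) : StrictMono (st1 ψ t).1 := by
  induction t with
  | zero => exact strictMono_id
  | succ n ih =>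
      obtain ⟨ρ, hρ, he⟩ := st1_comp ψ n
      rw [he]; exact ih.comp hρ

theorem st1_list_mono (ψ : ℕ → Rd d → ℝ) {a : Rd d} {t t' : ℕ} (h : t ≤ t')
    (ha : a ∈ (st1 ψ t).2) : a ∈ (st1 ψ t').2 := by
  induction t' with
  | zero => exact (Nat.le_zero.1 h) ▸ ha
  | succ n ih =>
      rcases Nat.lt_or_ge t (n+1) with hlt | hge
      · have := ih (Nat.lt_succ_iff.1 hlt)
        rw [st1]
        split_ifs with hc
        · exact List.mem_cons_of_mem _ this
        · exact this
      · exact (Nat.le_antisymm h hge) ▸ ha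

/-- anchor boundedness invariant -/
theorem st1_bound (ψ : ℕ → Rd d → ℝ) (t : ℕ) :
    ∀ a ∈ (st1 ψ t).2, ∃ M, ∀ m, ψ ((st1 ψ t).1 m) a ≤ M := by
  induction t with
  | zero => intro a ha; simp [st1] at ha
  | succ n ih =>
      intro a ha
      rw [st1] at ha ⊢
      by_cases h : ∃ y ∈ Cand ψ (st1 ψ n).1 n, beta ψ (st1 ψ n).1 (st1 ψ n).2 n / 2 < dA (st1 ψ n).2 y
      · rw [dif_pos h] at ha ⊢
        rcases List.mem_cons.1 ha with rfl | hmem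
        · refine ⟨h.choose_spec.1.2.choose, fun m => ?_⟩
          exact (extraction_of_frequently_atTop h.choose_spec.1.2.choose_spec).choose_spec.2 m
        · obtain ⟨M, hM⟩ := ih a hmem
          exact ⟨M, fun m => hM _⟩
      · rw [dif_neg h] at ha ⊢
        exact ih a ha

/-- diagonal lemma -/
theorem st1_dl (ψ : ℕ → Rd d → ℝ) {t k : ℕ} (h : t ≤ k) (j : ℕ) :
    ∃ m, j ≤ m ∧ (st1 ψ k).1 j = (st1 ψ t).1 m := by
  induction k generalizing j with
  | zero => exact ⟨j, le_rfl, by rw [Nat.le_zero.1 h]⟩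
  | succ n ih =>
      rcases Nat.lt_or_ge t (n+1) with hlt | hge
      · obtain ⟨ρ, hρ, he⟩ := st1_comp ψ n
        obtain ⟨m, hm, he2⟩ := ih (Nat.lt_succ_iff.1 hlt) (ρ j)
        exact ⟨m, le_trans hρ.le_apply hm, by rw [he]; exact he2⟩
      · exact ⟨j, le_rfl, by rw [Nat.le_antisymm h hge]⟩

/-- the phase-1 diagonal subsequence -/
noncomputable def tau1 (ψ : ℕ → Rd d → ℝ) : ℕ → ℕ := fun k => (st1 ψ k).1 k

theorem tau1_strictMono (ψ : ℕ → Rd d → ℝ) : StrictMono (tau1 ψ) := by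
  intro k k' hkk
  obtain ⟨m, hm, he⟩ := st1_dl ψ (le_of_lt hkk) k'
  rw [tau1, tau1, he]
  exact st1_strictMono ψ k (lt_of_lt_of_le hkk hm)

theorem tau1_rel (ψ : ℕ → Rd d → ℝ) {t k : ℕ} (h : t ≤ k) :
    ∃ m, k ≤ m ∧ tau1 ψ k = (st1 ψ t).1 m := st1_dl ψ h k

/-- bound at an anchor along tau1 -/
theorem tau1_anchor_bound (ψ : ℕ → Rd d → ℝ) {a : Rd d} {t : ℕ} (ha : a ∈ (st1 ψ t).2) :
    ∃ M, ∀ k, ψ (tau1 ψ k) a ≤ M := by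
  obtain ⟨M, hM⟩ := st1_bound ψ t a ha
  refine bound_of_eventually ⟨t, M, fun k hk => ?_⟩
  obtain ⟨m, _, he⟩ := tau1_rel ψ hk
  rw [he]; exact hM m

/-- selection lemma -/
theorem st1_sel (ψ : ℕ → Rd d → ℝ) {t : ℕ} {c : ℝ} (hc : 0 < c)
    (hex : ∃ y ∈ Cand ψ (st1 ψ t).1 t, c ≤ dA (st1 ψ t).2 y) :
    ∃ y, y ∈ Cand ψ (st1 ψ t).1 t ∧ c / 2 < dA (st1 ψ t).2 y ∧
      (st1 ψ (t + 1)).2 = y :: (st1 ψ t).2 := by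
  obtain ⟨y₀, hy₀c, hy₀d⟩ := hex
  have hbdd : BddAbove (dA (st1 ψ t).2 '' Cand ψ (st1 ψ t).1 t) :=
    ⟨1, by rintro v ⟨y, -, rfl⟩; exact dA_le_one _ _⟩
  have hne : (dA (st1 ψ t).2 '' Cand ψ (st1 ψ t).1 t).Nonempty := ⟨_, ⟨y₀, hy₀c, rfl⟩⟩
  have hβ : c ≤ beta ψ (st1 ψ t).1 (st1 ψ t).2 t :=
    le_trans hy₀d (le_csSup hbdd ⟨y₀, hy₀c, rfl⟩)
  have hβpos : 0 < beta ψ (st1 ψ t).1 (st1 ψ t).2 t := lt_of_lt_of_le hc hβ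
  obtain ⟨v, ⟨y, hyc, rfl⟩, hv⟩ := exists_lt_of_lt_csSup hne (half_lt_self hβpos)
  have h : ∃ y, y ∈ Cand ψ (st1 ψ t).1 t ∧
      beta ψ (st1 ψ t).1 (st1 ψ t).2 t / 2 < dA (st1 ψ t).2 y := ⟨y, hyc, hv⟩
  refine ⟨h.choose, h.choose_spec.1, lt_of_le_of_lt (by linarith) h.choose_spec.2, ?_⟩
  conv_lhs => rw [st1]
  rw [dif_pos h]

theorem tendsto_of_rel {h g : ℕ → ℝ} {L : ℝ} (hh : Tendsto h atTop (𝓝 L)) (K : ℕ)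
    (hrel : ∀ k, K ≤ k → ∃ m, k ≤ m ∧ g k = h m) : Tendsto g atTop (𝓝 L) := by
  rw [Metric.tendsto_atTop] at hh ⊢
  intro ε hε
  obtain ⟨N, hN⟩ := hh ε hε
  refine ⟨max N K, fun k hk => ?_⟩
  obtain ⟨m, hm, he⟩ := hrel k (le_trans (le_max_right _ _) hk)
  rw [he]
  exact hN m (le_trans (le_trans (le_max_left _ _) hk) hm)

/-- no infinite uniformly separated set in a ball -/
theorem pigeon {S : Set (Rd d)} {c : ℝ} (hc : 0 < c) (hS : S.Infinite)
    {N : ℝ} (hb : ∀ x ∈ S, ‖x‖ ≤ N)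
    (hsep : ∀ x ∈ S, ∀ y ∈ S, x ≠ y → c / 2 < dist x y) : False := by
  have hK : TotallyBounded (Metric.closedBall (0 : Rd d) N) :=
    (isCompact_closedBall _ _).totallyBounded
  rw [Metric.totallyBounded_iff] at hK
  obtain ⟨t, htf, htc⟩ := hK (c / 5) (by linarith)
  have hsub : S ⊆ ⋃ y ∈ t, Metric.ball y (c / 5) := by
    intro x hx
    exact htc (by simpa [Metric.mem_closedBall, dist_eq_norm] using hb x hx)
  have : ∃ y ∈ t, (S ∩ Metric.ball y (c / 5)).Infinite := by
    by_contra hcon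
    push_neg at hcon
    have : S.Finite := by
      have : S = ⋃ y ∈ t, S ∩ Metric.ball y (c / 5) := by
        ext z; simp only [Set.mem_iUnion, Set.mem_inter_iff]
        constructor
        · intro hz
          obtain ⟨y, hy, hzy⟩ := Set.mem_iUnion₂.1 (hsub hz)
          exact ⟨y, hy, hz, hzy⟩
        · rintro ⟨y, hy, hz, -⟩; exact hz
      rw [this]
      exact Set.Finite.biUnion htf fun y hy => hcon y hy
    exact hS this
  obtain ⟨y, -, hinf⟩ := this
  obtain ⟨x, hx⟩ := hinf.nonempty
  obtain ⟨z, hz, hzx⟩ := (hinf.diff (Set.finite_singleton x)).nonempty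
  have h1 : dist z x < 2 * (c / 5) := by
    have hx2 := hx.2; have hz2 := hz.2
    calc dist z x ≤ dist z y + dist x y := dist_triangle_right _ _ _
    _ < 2 * (c / 5) := by
        rw [Metric.mem_ball] at hx2 hz2; linarith
  have h2 := hsep z hz.1 x hx.1 (by simpa using hzx)
  linarith


end StmtAux

namespace StmtAux
attribute [local instance] Classical.propDecidable
variable {d : ℕ}

/-- the set of all anchors ever chosen -/
def anchors (ψ : ℕ → Rd d → ℝ) : Set (Rd d) := {a | ∃ t, a ∈ (st1 ψ t).2}

theorem anchors_bound (ψ : ℕ → Rd d → ℝ) {a : Rd d} (ha : a ∈ anchors ψ) :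
    ∃ M, ∀ k, ψ (tau1 ψ k) a ≤ M := by
  obtain ⟨t, ht⟩ := ha
  exact tau1_anchor_bound ψ ht

/-- transfer of frequent boundedness from tau1 to each stage -/
theorem freq_transfer (ψ : ℕ → Rd d → ℝ) {y : Rd d} {b : ℝ}
    (hf : ∃ᶠ k in atTop, ψ (tau1 ψ k) y ≤ b) (t : ℕ) :
    ∃ᶠ m in atTop, ψ ((st1 ψ t).1 m) y ≤ b := by
  rw [frequently_atTop] at hf ⊢
  intro N
  obtain ⟨k, hk, hb⟩ := hf (max N t)
  obtain ⟨m, hm, he⟩ := tau1_rel ψ (le_trans (le_max_right _ _) hk)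
  exact ⟨m, le_trans (le_trans (le_max_left _ _) hk) hm, by rwa [he] at hb⟩

/-- Phase 1 main conclusion: divergence outside the closed convex hull of anchors. -/
theorem tau1_diverges (ψ : ℕ → Rd d → ℝ) {y : Rd d}
    (hy : y ∉ closure (convexHull ℝ (anchors ψ))) :
    Tendsto (fun k => ψ (tau1 ψ k) y) atTop atTop := by
  by_contra hnt
  rw [tendsto_atTop] at hnt
  push_neg at hnt
  obtain ⟨b, hb⟩ := hnt
  have hb' : ∃ᶠ k in atTop, ψ (tau1 ψ k) y ≤ b :=
    (Filter.not_eventually.1 hb).mono fun k hk => le_of_lt (not_not.1 hk)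
  -- y is a candidate at every stage with large enough radius
  set N : ℕ := ⌈‖y‖⌉₊ with hN
  have hyN : ‖y‖ ≤ (N : ℝ) := Nat.le_ceil _
  have hcand : ∀ t, (Nat.unpair t).1 = N → y ∈ Cand ψ (st1 ψ t).1 t := by
    intro t ht
    exact ⟨by rw [ht]; exact hyN, b, freq_transfer ψ hb' t⟩
  -- there is a stage with a nonempty anchor list
  have hnonempty : ∃ t₁, (st1 ψ t₁).2 ≠ [] := by
    by_contra hcon
    push_neg at hcon
    set t₀ : ℕ := Nat.pair N 0 with ht₀
    have h1 : y ∈ Cand ψ (st1 ψ t₀).1 t₀ := hcand t₀ (by simp [ht₀, Nat.unpair_pair])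
    have h2 : dA (st1 ψ t₀).2 y = 1 := by rw [dA, if_pos (hcon t₀)]
    obtain ⟨y', -, -, hcons⟩ := st1_sel ψ one_pos ⟨y, h1, le_of_eq h2.symm⟩
    have := hcon (t₀ + 1)
    rw [hcons] at this
    simp at this
  obtain ⟨t₁, ht₁⟩ := hnonempty
  have hlist_ne : ∀ t, t₁ ≤ t → (st1 ψ t).2 ≠ [] := by
    intro t ht
    obtain ⟨a, ha⟩ := List.exists_mem_of_ne_nil _ ht₁
    exact List.ne_nil_of_mem (st1_list_mono ψ ht ha)
  -- the hull is nonempty, so the distance to it is positive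
  have hHne : (convexHull ℝ (anchors ψ)).Nonempty := by
    obtain ⟨a, ha⟩ := List.exists_mem_of_ne_nil _ ht₁
    exact ⟨a, subset_convexHull ℝ _ ⟨t₁, ha⟩⟩
  have hdpos : 0 < Metric.infDist y (convexHull ℝ (anchors ψ)) := by
    rcases lt_or_eq_of_le (Metric.infDist_nonneg (s := convexHull ℝ (anchors ψ)) (x := y))
      with h | h
    · exact h
    · exact absurd ((Metric.mem_closure_iff_infDist_zero hHne).2 h.symm) hy
  set c : ℝ := min (Metric.infDist y (convexHull ℝ (anchors ψ))) 1 with hc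
  have hcpos : 0 < c := lt_min hdpos one_pos
  have hc1 : c ≤ 1 := min_le_right _ _
  -- at each stage t ≥ t₁ with radius N, selection occurs with a well-separated new anchor
  have hstage : ∀ t, t₁ ≤ t → (Nat.unpair t).1 = N →
      ∃ z, ‖z‖ ≤ (N : ℝ) ∧ c / 2 < Metric.infDist z {a | a ∈ (st1 ψ t).2} ∧
        (st1 ψ (t + 1)).2 = z :: (st1 ψ t).2 := by
    intro t ht hRt
    have hsub : {a | a ∈ (st1 ψ t).2} ⊆ convexHull ℝ (anchors ψ) :=
      fun a ha => subset_convexHull ℝ _ ⟨t, ha⟩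
    have hsne : ({a | a ∈ (st1 ψ t).2} : Set (Rd d)).Nonempty := by
      obtain ⟨a, ha⟩ := List.exists_mem_of_ne_nil _ (hlist_ne t ht)
      exact ⟨a, ha⟩
    have hdA : c ≤ dA (st1 ψ t).2 y := by
      rw [dA, if_neg (hlist_ne t ht)]
      exact le_min (le_trans (min_le_left _ _)
        (Metric.infDist_le_infDist_of_subset hsub hsne)) hc1
    obtain ⟨z, hzc, hzd, hzcons⟩ := st1_sel ψ hcpos ⟨y, hcand t hRt, hdA⟩
    refine ⟨z, by rw [← hRt]; exact hzc.1, ?_, hzcons⟩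
    have : c / 2 < dA (st1 ψ t).2 z := hzd
    rw [dA, if_neg (hlist_ne t ht)] at this
    exact lt_of_lt_of_le this (min_le_left _ _)
  -- produce infinitely many separated anchors in a ball: contradiction
  set T : ℕ → ℕ := fun j => Nat.pair N (j + t₁) with hT
  have hTmono : StrictMono T := fun a b hab =>
    Nat.pair_lt_pair_right _ (by omega)
  have hTt₁ : ∀ j, t₁ ≤ T j := fun j =>
    le_trans (by omega : t₁ ≤ j + t₁) (Nat.right_le_pair _ _)
  have hTN : ∀ j, (Nat.unpair (T j)).1 = N := fun j => by simp [hT, Nat.unpair_pair]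
  have hz : ∀ j, ∃ z, ‖z‖ ≤ (N : ℝ) ∧
      c / 2 < Metric.infDist z {a | a ∈ (st1 ψ (T j)).2} ∧
      (st1 ψ (T j + 1)).2 = z :: (st1 ψ (T j)).2 :=
    fun j => hstage (T j) (hTt₁ j) (hTN j)
  choose α hα1 hα2 hα3 using hz
  have hmem : ∀ j, α j ∈ (st1 ψ (T j + 1)).2 := fun j => by rw [hα3 j]; simp
  have hsep : ∀ j j', j < j' → c / 2 < dist (α j') (α j) := by
    intro j j' hjj
    have hTle : T j + 1 ≤ T j' := Nat.succ_le_of_lt (hTmono hjj)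
    have hmem' : α j ∈ {a | a ∈ (st1 ψ (T j')).2} :=
      st1_list_mono ψ hTle (hmem j)
    exact lt_of_lt_of_le (hα2 j') (Metric.infDist_le_dist_of_mem hmem')
  have hinj : Function.Injective α := by
    intro j j' hjj
    by_contra hne
    rcases Nat.lt_or_ge j j' with h | h
    · have := hsep j j' h; rw [hjj] at this; simp at this; linarith
    · have hlt : j' < j := lt_of_le_of_ne h (Ne.symm hne)
      have := hsep j' j hlt; rw [hjj] at this; simp at this; linarith
  refine pigeon hcpos (Set.infinite_range_of_injective hinj) (N := (N : ℝ)) ?_ ?_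
  · rintro x ⟨j, rfl⟩; exact hα1 j
  · rintro x ⟨j, rfl⟩ x' ⟨j', rfl⟩ hne
    rcases Nat.lt_or_ge j' j with h | h
    · exact dist_comm (α j') (α j) ▸ hsep j' j h
    · have hlt : j' ≠ j := fun he => hne (by rw [he])
      exact hsep j j' (lt_of_le_of_ne h (Ne.symm hlt)) |>.trans_le (le_of_eq (dist_comm _ _))

end StmtAux

namespace StmtAux
attribute [local instance] Classical.propDecidable

/-- Phase 2 recursion: successively extract convergent subsequences at points `0,1,2,...` -/
noncomputable def st2 (g : ℕ → ℕ → ℝ) : ℕ → (ℕ → ℕ)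
  | 0 => id
  | t + 1 =>
      let σ := st2 g t
      if h : ∃ φ : ℕ → ℕ, StrictMono φ ∧ ∃ L, Tendsto (fun m => g (σ (φ m)) t) atTop (𝓝 L)
      then σ ∘ h.choose else σ

theorem st2_comp (g : ℕ → ℕ → ℝ) (t : ℕ) :
    ∃ ρ : ℕ → ℕ, StrictMono ρ ∧ st2 g (t + 1) = st2 g t ∘ ρ := by
  rw [st2]
  split_ifs with h
  · exact ⟨_, h.choose_spec.1, rfl⟩
  · exact ⟨id, strictMono_id, rfl⟩

theorem st2_strictMono (g : ℕ → ℕ → ℝ) (t : ℕ) : StrictMono (st2 g t) := by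
  induction t with
  | zero => exact strictMono_id
  | succ n ih =>
      obtain ⟨ρ, hρ, he⟩ := st2_comp g n
      rw [he]; exact ih.comp hρ

theorem st2_dl (g : ℕ → ℕ → ℝ) {t k : ℕ} (h : t ≤ k) (j : ℕ) :
    ∃ m, j ≤ m ∧ st2 g k j = st2 g t m := by
  induction k generalizing j with
  | zero => exact ⟨j, le_rfl, by rw [Nat.le_zero.1 h]⟩
  | succ n ih =>
      rcases Nat.lt_or_ge t (n+1) with hlt | hge
      · obtain ⟨ρ, hρ, he⟩ := st2_comp g n
        obtain ⟨m, hm, he2⟩ := ih (Nat.lt_succ_iff.1 hlt) (ρ j)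
        exact ⟨m, le_trans hρ.le_apply hm, by rw [he]; exact he2⟩
      · exact ⟨j, le_rfl, by rw [Nat.le_antisymm h hge]⟩

theorem st2_conv (g : ℕ → ℕ → ℝ) (t : ℕ) (hbd : ∃ M, ∀ k, g k t ∈ Set.Icc (0:ℝ) M) :
    ∃ L, Tendsto (fun m => g (st2 g (t + 1) m) t) atTop (𝓝 L) := by
  obtain ⟨M, hM⟩ := hbd
  have h : ∃ φ : ℕ → ℕ, StrictMono φ ∧
      ∃ L, Tendsto (fun m => g (st2 g t (φ m)) t) atTop (𝓝 L) := by
    obtain ⟨a, -, φ, hφ, ha⟩ := (isCompact_Icc (a := (0:ℝ)) (b := M)).tendsto_subseq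
      (x := fun m => g (st2 g t m) t) (fun m => hM _)
    exact ⟨φ, hφ, a, ha⟩
  rw [st2, dif_pos h]
  exact h.choose_spec.2

noncomputable def tau2 (g : ℕ → ℕ → ℝ) : ℕ → ℕ := fun k => st2 g k k

theorem tau2_strictMono (g : ℕ → ℕ → ℝ) : StrictMono (tau2 g) := by
  intro k k' hkk
  obtain ⟨m, hm, he⟩ := st2_dl g (le_of_lt hkk) k'
  rw [tau2, tau2, he]
  exact st2_strictMono g k (lt_of_lt_of_le hkk hm)

theorem tau2_conv (g : ℕ → ℕ → ℝ) (t : ℕ) (hbd : ∃ M, ∀ k, g k t ∈ Set.Icc (0:ℝ) M) :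
    ∃ L, Tendsto (fun k => g (tau2 g k) t) atTop (𝓝 L) := by
  obtain ⟨L, hL⟩ := st2_conv g t hbd
  refine ⟨L, tendsto_of_rel hL (t + 1) fun k hk => ?_⟩
  obtain ⟨m, hm, he⟩ := st2_dl g hk k
  exact ⟨m, le_trans le_rfl hm, by rw [tau2, he]⟩

end StmtAux


namespace StmtAux
attribute [local instance] Classical.propDecidable
variable {d : ℕ}

/-- metric characterization of the intrinsic interior -/
theorem mem_intrinsicInterior_iff' {s : Set (Rd d)} {x : Rd d} :
    x ∈ intrinsicInterior ℝ s ↔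
      x ∈ affineSpan ℝ s ∧ ∃ δ, 0 < δ ∧
        ∀ z, dist z x < δ → z ∈ affineSpan ℝ s → z ∈ s := by
  constructor
  · rintro ⟨y, hy, rfl⟩
    refine ⟨y.2, ?_⟩
    rw [mem_interior_iff_mem_nhds, Metric.mem_nhds_iff] at hy
    obtain ⟨δ, hδ, hball⟩ := hy
    refine ⟨δ, hδ, fun z hz hzA => ?_⟩
    have : (⟨z, hzA⟩ : affineSpan ℝ s) ∈ Metric.ball y δ := by
      rw [Metric.mem_ball, Subtype.dist_eq]
      exact hz
    exact hball this
  · rintro ⟨hxA, δ, hδ, h⟩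
    refine ⟨⟨x, hxA⟩, ?_, rfl⟩
    rw [mem_interior_iff_mem_nhds, Metric.mem_nhds_iff]
    refine ⟨δ, hδ, fun z hz => ?_⟩
    rw [Metric.mem_ball, Subtype.dist_eq] at hz
    exact h z hz z.2

theorem affineSpan_closure_eq {H : Set (Rd d)} :
    affineSpan ℝ (closure H) = affineSpan ℝ H := by
  apply le_antisymm
  · rw [affineSpan_le]
    have h1 : closure H ⊆ closure (affineSpan ℝ H : Set (Rd d)) :=
      closure_mono (subset_affineSpan ℝ H)
    have h2 : IsClosed (affineSpan ℝ H : Set (Rd d)) :=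
      (affineSpan ℝ H).closed_of_finiteDimensional
    intro z hz
    exact h2.closure_subset (h1 hz)
  · exact affineSpan_mono ℝ subset_closure

/-- A point of the relative interior of the closure of a convex set lies in the set. -/
theorem mem_of_mem_intrinsicInterior_closure {H : Set (Rd d)} (hH : Convex ℝ H)
    {x : Rd d} (hx : x ∈ intrinsicInterior ℝ (closure H)) : x ∈ H := by
  have hCne : (closure H).Nonempty := ⟨x, intrinsicInterior_subset hx⟩
  have hHne : H.Nonempty := by rwa [closure_nonempty_iff] at hCne
  obtain ⟨hxA, δ0, hδ0, hball⟩ := mem_intrinsicInterior_iff'.1 hx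
  rw [affineSpan_closure_eq] at hxA hball
  -- a relative interior point of H itself
  obtain ⟨y0, hy0⟩ := hHne.intrinsicInterior hH
  obtain ⟨hy0A, δy, hδy, hbally⟩ := mem_intrinsicInterior_iff'.1 hy0
  by_cases hxy : x = y0
  · rw [hxy]; exact intrinsicInterior_subset hy0
  have hn : 0 < ‖x - y0‖ := by
    rw [norm_pos_iff, sub_ne_zero]; exact hxy
  set t : ℝ := δ0 / (2 * ‖x - y0‖) with htdef
  have ht : 0 < t := div_pos hδ0 (by positivity)
  set z : Rd d := t • (x - y0) + x with hzdef
  have hzA : z ∈ affineSpan ℝ H := by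
    have := (affineSpan ℝ H).smul_vsub_vadd_mem t hxA hy0A hxA
    simpa [vsub_eq_sub, vadd_eq_add] using this
  have hzx : dist z x < δ0 := by
    have hd : dist z x = t * ‖x - y0‖ := by
      rw [hzdef, dist_eq_norm, add_sub_cancel_right, norm_smul, Real.norm_eq_abs,
        abs_of_pos ht]
    have h2 : t * ‖x - y0‖ = δ0 / 2 := by
      rw [htdef]; field_simp
    rw [hd, h2]; linarith
  have hzC : z ∈ closure H := hball z hzx hzA
  set μ : ℝ := 1 / (1 + t) with hμdef
  have hμ0 : 0 < μ := by positivity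
  have hμ1 : μ < 1 := by
    rw [hμdef, div_lt_one (by linarith)]; linarith
  have hxcomb : x = μ • z + (1 - μ) • y0 := by
    rw [hzdef, hμdef]
    have h1t : (1:ℝ) + t ≠ 0 := by positivity
    match_scalars <;> field_simp <;> ring
  -- approximate z by a point of H
  set ρ : ℝ := (1 - μ) / μ * δy with hρdef
  have hρ : 0 < ρ := by
    apply mul_pos (div_pos (by linarith) hμ0) hδy
  obtain ⟨z', hz'H, hzz'⟩ := Metric.mem_closure_iff.1 hzC ρ hρ
  set y'' : Rd d := (μ / (1 - μ)) • (z - z') + y0 with hydef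
  have hy''A : y'' ∈ affineSpan ℝ H := by
    have := (affineSpan ℝ H).smul_vsub_vadd_mem (μ / (1 - μ)) hzA
      (subset_affineSpan ℝ H hz'H) hy0A
    simpa [vsub_eq_sub, vadd_eq_add] using this
  have hy''y0 : dist y'' y0 < δy := by
    rw [hydef, dist_eq_norm]
    simp only [add_sub_cancel_right, norm_smul, Real.norm_eq_abs]
    rw [abs_of_pos (div_pos hμ0 (by linarith))]
    have hzn : ‖z - z'‖ < ρ := by rwa [dist_eq_norm] at hzz'
    calc μ / (1 - μ) * ‖z - z'‖ < μ / (1 - μ) * ρ := by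
          apply mul_lt_mul_of_pos_left hzn (div_pos hμ0 (by linarith))
      _ = δy := by
          have hμne : μ ≠ 0 := ne_of_gt hμ0
          have h1μ : (1:ℝ) - μ ≠ 0 := by linarith
          rw [hρdef]; field_simp
  have hy''H : y'' ∈ H := hbally y'' hy''y0 hy''A
  have hfinal : x = μ • z' + (1 - μ) • y'' := by
    rw [hxcomb, hydef]
    have h1μ : (1:ℝ) - μ ≠ 0 := by linarith
    match_scalars <;> field_simp <;> ring
  rw [hfinal]
  exact hH hz'H hy''H (le_of_lt hμ0) (by linarith) (by ring)


/-- Around each relative interior point of `closure H` there is a relative ball contained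
in the convex hull of finitely many points of `H`. -/
theorem local_geom {H : Set (Rd d)} (hH : Convex ℝ H) {x : Rd d}
    (hx : x ∈ intrinsicInterior ℝ (closure H)) :
    ∃ r, 0 < r ∧ ∃ F : Finset (Rd d), ↑F ⊆ H ∧
      ∀ z, dist z x < r → z ∈ affineSpan ℝ (closure H) →
        z ∈ convexHull ℝ (F : Set (Rd d)) := by
  obtain ⟨hxA, δ0, hδ0, hball⟩ := mem_intrinsicInterior_iff'.1 hx
  set A : AffineSubspace ℝ (Rd d) := affineSpan ℝ (closure H) with hA
  set V : Submodule ℝ (Rd d) := A.direction with hV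
  set m : ℕ := Module.finrank ℝ V with hm
  set v : Module.Basis (Fin m) ℝ V := Module.finBasis ℝ V with hv
  obtain ⟨cV, hcV⟩ : ∃ a : ℝ, a = ∑ i, ‖(v i : Rd d)‖ := ⟨_, rfl⟩
  have hcV0 : 0 ≤ cV := by
    rw [hcV]; exact Finset.sum_nonneg fun i _ => norm_nonneg _
  obtain ⟨η, hη⟩ : ∃ a : ℝ, a = δ0 / (4 * (cV + 1)) := ⟨_, rfl⟩
  have hηpos : 0 < η := by rw [hη]; exact div_pos hδ0 (by positivity)
  set sumvV : V := ∑ i, v i with hsumvV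
  obtain ⟨q0, hq0⟩ : ∃ a : Rd d, a = x - (η / (m + 1)) • (sumvV : Rd d) := ⟨_, rfl⟩
  have hq0A : q0 ∈ A := by
    have h1 : (-(η / (m + 1)) • (sumvV : Rd d)) +ᵥ x ∈ A :=
      A.vadd_mem_of_mem_direction (V.smul_mem _ sumvV.2) hxA
    rw [vadd_eq_add] at h1
    have h2 : q0 = -(η / (↑m + 1)) • (sumvV : Rd d) + x := by rw [hq0]; module
    rwa [h2]
  set vert : Fin (m + 1) → Rd d :=
    Fin.cons q0 (fun i => q0 + η • ((v i : Rd d))) with hvert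
  have hvertA : ∀ j, vert j ∈ A := by
    intro j
    refine Fin.cases ?_ ?_ j
    · simp only [hvert, Fin.cons_zero]; exact hq0A
    · intro i
      have h1 : (η • ((v i : Rd d))) +ᵥ q0 ∈ A :=
        A.vadd_mem_of_mem_direction (V.smul_mem _ (v i).2) hq0A
      rw [vadd_eq_add] at h1
      simp only [hvert, Fin.cons_succ]
      rwa [add_comm]
  have hnorm_vi : ∀ i, ‖(v i : Rd d)‖ ≤ cV := by
    intro i
    rw [hcV]
    exact Finset.single_le_sum (fun i _ => norm_nonneg ((v i : Rd d)))
      (Finset.mem_univ i)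
  have hsumnorm : ‖(sumvV : Rd d)‖ ≤ cV := by
    rw [hcV, hsumvV]
    push_cast
    exact norm_sum_le _ _
  have hq0x : ‖q0 - x‖ ≤ η * cV := by
    have he : q0 - x = -((η / (↑m + 1)) • (sumvV : Rd d)) := by rw [hq0]; module
    rw [he, norm_neg, norm_smul, Real.norm_eq_abs]
    have h1 : |η / (↑m + 1)| ≤ η := by
      rw [abs_of_pos (by positivity), div_le_iff₀ (by positivity)]
      nlinarith [hηpos, Nat.cast_nonneg (α := ℝ) m]
    exact mul_le_mul h1 hsumnorm (norm_nonneg _) (le_of_lt hηpos)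
  have hvertx : ∀ j, dist (vert j) x < δ0 / 2 := by
    have hkey : 2 * (η * cV) < δ0 / 2 := by
      have hη' : η * (4 * (cV + 1)) = δ0 := by rw [hη]; field_simp
      nlinarith [hη', hηpos, hcV0]
    intro j
    refine Fin.cases ?_ ?_ j
    · simp only [hvert, Fin.cons_zero, dist_eq_norm]
      calc ‖q0 - x‖ ≤ η * cV := hq0x
        _ < δ0 / 2 := by nlinarith [hkey, mul_nonneg (le_of_lt hηpos) hcV0]
    · intro i
      simp only [hvert, Fin.cons_succ, dist_eq_norm]
      have : q0 + η • ((v i : Rd d)) - x = (q0 - x) + η • ((v i : Rd d)) := by module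
      rw [this]
      calc ‖(q0 - x) + η • ((v i : Rd d))‖ ≤ ‖q0 - x‖ + ‖η • ((v i : Rd d))‖ := norm_add_le _ _
        _ ≤ η * cV + η * cV := by
            refine add_le_add hq0x ?_
            rw [norm_smul, Real.norm_eq_abs, abs_of_pos hηpos]
            exact mul_le_mul_of_nonneg_left (hnorm_vi i) (le_of_lt hηpos)
        _ < δ0 / 2 := by linarith [hkey]
  -- each vertex is in the relative interior of closure H, hence in H
  have hvertH : ∀ j, vert j ∈ H := by
    intro j
    apply mem_of_mem_intrinsicInterior_closure hH
    rw [mem_intrinsicInterior_iff']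
    refine ⟨hvertA j, δ0 / 2, by linarith, fun z hz hzA => ?_⟩
    apply hball z ?_ hzA
    calc dist z x ≤ dist z (vert j) + dist (vert j) x := dist_triangle _ _ _
      _ < δ0 / 2 + δ0 / 2 := add_lt_add hz (hvertx j)
      _ = δ0 := by ring
  -- coordinate functionals
  set g := fun (i : Fin m) (z : Rd d) => v.coord i (V.orthogonalProjectionOnto (z - q0)) with hg
  have hgcont : ∀ i, Continuous (g i) := by
    intro i
    exact (LinearMap.continuous_of_finiteDimensional (v.coord i)).comp
      (V.orthogonalProjectionOnto.continuous.comp (continuous_id.sub continuous_const))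
  -- representation on A
  have hrep : ∀ z, z ∈ A → z = q0 + ∑ i, g i z • ((v i : Rd d)) := by
    intro z hzA
    have hVz : z - q0 ∈ V := by
      have := AffineSubspace.vsub_mem_direction hzA hq0A
      simpa [vsub_eq_sub] using this
    have hPz : ((V.orthogonalProjectionOnto (z - q0)) : Rd d) = z - q0 := by
      exact congrArg Subtype.val (V.orthogonalProjectionOnto_mem_subspace_eq_self ⟨z - q0, hVz⟩)
    have hsr := v.sum_repr (V.orthogonalProjectionOnto (z - q0))
    have : ∑ i, g i z • ((v i : Rd d)) = ((V.orthogonalProjectionOnto (z - q0) : V) : Rd d) := by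
      rw [← hsr]
      push_cast
      apply Finset.sum_congr rfl
      intro i _
      rw [hg]
      simp [Module.Basis.coord_apply]
    rw [this, hPz]
    module
  -- values at x
  have hgx : ∀ i, g i x = η / (m + 1) := by
    intro i
    have hx0 : x - q0 = ((((η / (↑m + 1)) • sumvV : V) : Rd d)) := by
      rw [hq0]; push_cast; module
    have hPx : V.orthogonalProjectionOnto (x - q0) = (η / (↑m + 1)) • sumvV := by
      rw [hx0, Submodule.orthogonalProjectionOnto_mem_subspace_eq_self]
    have hsw : g i x = (η / (↑m + 1)) * v.coord i sumvV := by
      show v.coord i (V.orthogonalProjectionOnto (x - q0)) = _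
      rw [hPx, LinearMap.map_smul, smul_eq_mul]
    rw [hsw]
    have : v.coord i sumvV = 1 := by
      rw [hsumvV]
      simp only [map_sum, Module.Basis.coord_apply, Module.Basis.repr_self]
      rw [Finset.sum_eq_single i]
      · simp
      · intro b _ hb; simp [Finsupp.single_apply, hb]
      · intro h; exact absurd (Finset.mem_univ i) h
    rw [this, mul_one]
  -- the open region of good coordinates
  set U : Set (Rd d) := {z | (∀ i, 0 < g i z) ∧ ∑ i, g i z < η} with hU
  have hUopen : IsOpen U := by
    have h1 : IsOpen {z : Rd d | ∀ i, 0 < g i z} := by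
      have : {z : Rd d | ∀ i, 0 < g i z} = ⋂ i, {z | 0 < g i z} := by
        ext z; simp
      rw [this]
      exact isOpen_iInter_of_finite fun i => isOpen_lt continuous_const (hgcont i)
    have h2 : IsOpen {z : Rd d | ∑ i, g i z < η} :=
      isOpen_lt (continuous_finset_sum _ fun i _ => hgcont i) continuous_const
    exact h1.inter h2
  have hxU : x ∈ U := by
    constructor
    · intro i; rw [hgx i]; exact div_pos hηpos (by positivity)
    · have : ∑ i, g i x = m * (η / (m + 1)) := by
        rw [Finset.sum_congr rfl fun i _ => hgx i]
        simp [Finset.card_univ, mul_comm]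
      rw [this]
      have hmlt : (m : ℝ) / (m + 1) < 1 := by
        rw [div_lt_one (by positivity)]; linarith
      calc (m : ℝ) * (η / (m + 1)) = η * ((m : ℝ) / (m + 1)) := by ring
        _ < η * 1 := mul_lt_mul_of_pos_left hmlt hηpos
        _ = η := mul_one η
  obtain ⟨r, hr, hrball⟩ := Metric.isOpen_iff.1 hUopen x hxU
  refine ⟨r, hr, Finset.univ.image vert, ?_, ?_⟩
  · intro a ha
    rw [Finset.coe_image] at ha
    obtain ⟨j, -, rfl⟩ := ha
    exact hvertH j
  · intro z hz hzA
    have hzU : z ∈ U := hrball (by rwa [Metric.mem_ball])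
    -- convex combination
    set w : Fin (m + 1) → ℝ := Fin.cons (1 - (∑ i, g i z) / η) (fun i => g i z / η) with hw
    have hwnn : ∀ j, 0 ≤ w j := by
      intro j
      refine Fin.cases ?_ ?_ j
      · simp only [hw, Fin.cons_zero]
        have := hzU.2
        rw [sub_nonneg, div_le_one hηpos]
        exact le_of_lt this
      · intro i
        simp only [hw, Fin.cons_succ]
        exact le_of_lt (div_pos (hzU.1 i) hηpos)
    have hwsum : ∑ j, w j = 1 := by
      rw [hw, Fin.sum_cons]
      have : ∑ i : Fin m, g i z / η = (∑ i, g i z) / η := by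
        rw [Finset.sum_div]
      rw [this]
      ring
    have hcomb : ∑ j, w j • vert j = z := by
      have hsplit : ∑ j, w j • vert j
          = w 0 • vert 0 + ∑ i : Fin m, w i.succ • vert i.succ := Fin.sum_univ_succ _
      rw [hsplit]
      simp only [hw, hvert, Fin.cons_zero, Fin.cons_succ]
      have hterm : ∀ i : Fin m, (g i z / η) • (q0 + η • ((v i : Rd d)))
          = (g i z / η) • q0 + g i z • ((v i : Rd d)) := by
        intro i
        rw [smul_add, smul_smul]
        congr 2
        field_simp
      rw [Finset.sum_congr rfl fun i _ => hterm i, Finset.sum_add_distrib]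
      rw [← Finset.sum_smul]
      have : (∑ i : Fin m, g i z / η) = (∑ i, g i z) / η := by rw [Finset.sum_div]
      rw [this]
      have hzrep := hrep z hzA
      calc (1 - (∑ i, g i z) / η) • q0 + (((∑ i, g i z) / η) • q0
            + ∑ i, g i z • ((v i : Rd d)))
          = q0 + ∑ i, g i z • ((v i : Rd d)) := by module
        _ = z := hzrep.symm
    have hmem : Finset.univ.centerMass w vert
        ∈ convexHull ℝ (↑(Finset.univ.image vert) : Set (Rd d)) :=
      Finset.centerMass_mem_convexHull _ (fun j _ => hwnn j) (by rw [hwsum]; norm_num)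
        (fun j _ => by
          rw [Finset.coe_image]
          exact Set.mem_image_of_mem _ (Finset.mem_coe.2 (Finset.mem_univ j)))
    rw [Finset.centerMass_eq_of_sum_1 _ _ hwsum, hcomb] at hmem
    exact hmem


/-- one-sided Lipschitz estimate for a nonnegative convex function bounded on a relative ball -/
theorem convex_lip {f : Rd d → ℝ} (hf : ConvexOn ℝ Set.univ f) (h0 : ∀ y, 0 ≤ f y)
    {x : Rd d} {r M : ℝ} (hr : 0 < r) {A : AffineSubspace ℝ (Rd d)} (hxA : x ∈ A)
    (hb : ∀ z, dist z x < r → z ∈ A → f z ≤ M)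
    {u w : Rd d} (hu : dist u x < r / 4) (huA : u ∈ A) (hw : dist w x < r / 4) (hwA : w ∈ A) :
    f w - f u ≤ 2 * M / r * dist u w := by
  have hM0 : 0 ≤ M := le_trans (h0 x) (hb x (by simpa using hr) hxA)
  by_cases huw : u = w
  · rw [huw]
    simp only [sub_self]
    positivity
  have hn : 0 < dist u w := dist_pos.2 huw
  set n : ℝ := dist u w with hndef
  set z : Rd d := w + (r / 2 / n) • (w - u) with hzdef
  have hzA : z ∈ A := by
    have h1 : ((r / 2 / n) • (w - u)) +ᵥ w ∈ A := by
      apply A.vadd_mem_of_mem_direction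
      · have := AffineSubspace.vsub_mem_direction hwA huA
        rw [vsub_eq_sub] at this
        exact A.direction.smul_mem _ this
      · exact hwA
    rw [vadd_eq_add, add_comm] at h1
    exact h1
  have hzw : dist z w = r / 2 := by
    rw [hzdef, dist_eq_norm, add_sub_cancel_left, norm_smul, Real.norm_eq_abs]
    rw [abs_of_pos (div_pos (by linarith) hn)]
    rw [← dist_eq_norm, dist_comm w u, ← hndef]
    field_simp
  have hzx : dist z x < r := by
    calc dist z x ≤ dist z w + dist w x := dist_triangle _ _ _
      _ < r / 2 + r / 4 := by rw [hzw]; linarith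
      _ < r := by linarith
  have hfz : f z ≤ M := hb z hzx hzA
  set lam : ℝ := n / (n + r / 2) with hlam
  have hlam0 : 0 < lam := div_pos hn (by linarith)
  have hlam1 : lam < 1 := by
    rw [hlam, div_lt_one (by linarith)]
    linarith
  have hcomb : (1 - lam) • u + lam • z = w := by
    rw [hzdef, hlam]
    have hne : n + r / 2 ≠ 0 := by intro hcon; nlinarith
    have hnne : n ≠ 0 := ne_of_gt hn
    match_scalars <;> field_simp <;> ring
  have hcv := hf.2 (Set.mem_univ u) (Set.mem_univ z)
    (by linarith : (0:ℝ) ≤ 1 - lam) (le_of_lt hlam0) (by ring)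
  rw [hcomb, smul_eq_mul, smul_eq_mul] at hcv
  have h1 : f w - f u ≤ lam * (f z - f u) := by nlinarith [hcv]
  have h2 : lam * (f z - f u) ≤ lam * M := by
    apply mul_le_mul_of_nonneg_left _ (le_of_lt hlam0)
    have := h0 u
    linarith
  have h3 : lam ≤ 2 * n / r := by
    rw [hlam, div_le_div_iff₀ (by linarith) hr]
    nlinarith
  calc f w - f u ≤ lam * M := le_trans h1 h2
    _ ≤ 2 * n / r * M := mul_le_mul_of_nonneg_right h3 hM0
    _ = 2 * M / r * n := by ring

theorem convex_lip_abs {f : Rd d → ℝ} (hf : ConvexOn ℝ Set.univ f) (h0 : ∀ y, 0 ≤ f y)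
    {x : Rd d} {r M : ℝ} (hr : 0 < r) {A : AffineSubspace ℝ (Rd d)} (hxA : x ∈ A)
    (hb : ∀ z, dist z x < r → z ∈ A → f z ≤ M)
    {u w : Rd d} (hu : dist u x < r / 4) (huA : u ∈ A) (hw : dist w x < r / 4) (hwA : w ∈ A) :
    |f w - f u| ≤ 2 * M / r * dist u w := by
  rw [abs_sub_le_iff]
  constructor
  · exact convex_lip hf h0 hr hxA hb hu huA hw hwA
  · rw [dist_comm]
    exact convex_lip hf h0 hr hxA hb hw hwA hu huA


/-- countable dense subset of a nonempty set -/
theorem exists_dense_seq {H : Set (Rd d)} (hne : H.Nonempty) :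
    ∃ q : ℕ → Rd d, (∀ i, q i ∈ H) ∧ H ⊆ closure (Set.range q) := by
  obtain ⟨s, hsc, hsd⟩ := TopologicalSpace.exists_countable_dense (↥H)
  set c : Set (Rd d) := Subtype.val '' s with hc
  have hcH : c ⊆ H := by rintro x ⟨y, -, rfl⟩; exact y.2
  have hdense : ∀ x ∈ H, x ∈ closure c := by
    intro x hx
    have h1 : (⟨x, hx⟩ : ↥H) ∈ closure s := hsd _
    have h2 : Subtype.val '' closure s ⊆ closure c :=
      image_closure_subset_closure_image continuous_subtype_val
    exact h2 ⟨⟨x, hx⟩, h1, rfl⟩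
  have hcne : c.Nonempty := by
    obtain ⟨x, hx⟩ := hne
    exact closure_nonempty_iff.1 ⟨x, hdense x hx⟩
  obtain ⟨q, hq⟩ := (hsc.image _).exists_eq_range hcne
  refine ⟨q, fun i => hcH ?_, fun x hx => by rw [← hq]; exact hdense x hx⟩
  rw [hc, hq]
  exact Set.mem_range_self i


/-- uniform-in-k pointwise bounds propagate from a set to its convex hull -/
theorem hull_bound {S : Set (Rd d)} {f : ℕ → Rd d → ℝ}
    (hconv : ∀ k, ConvexOn ℝ Set.univ (f k))
    (hb : ∀ a ∈ S, ∃ M, ∀ k, f k a ≤ M) {z : Rd d} (hz : z ∈ convexHull ℝ S) :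
    ∃ M, ∀ k, f k z ≤ M := by
  rw [convexHull_eq_union_convexHull_finite_subsets] at hz
  obtain ⟨F, hFS, hzF⟩ := by
    simpa only [Set.mem_iUnion] using hz
  have hFne : F.Nonempty := by
    by_contra hcon
    rw [Finset.not_nonempty_iff_eq_empty.1 hcon] at hzF
    simp at hzF
  have h1 : ∀ a ∈ (F : Set (Rd d)), ∃ M, ∀ k, f k a ≤ M := fun a ha => hb a (hFS ha)
  choose! Mf hMf using h1
  refine ⟨F.sup' hFne Mf, fun k => ?_⟩
  obtain ⟨a, haF, hfa⟩ := (hconv k).exists_ge_of_mem_convexHull (Set.subset_univ _) hzF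
  exact le_trans (le_trans hfa (hMf a haF k)) (Finset.le_sup' Mf haF)


end StmtAux

end

/-- **Subsequence limits of nonnegative convex functions (Lemma C.1).** -/
theorem stmt18 {d : ℕ} (hd : 1 ≤ d) (ψ : ℕ → Rd d → ℝ)
    (hlsc : ∀ n, LowerSemicontinuous (ψ n)) (hconv : ∀ n, ConvexOn ℝ univ (ψ n))
    (hnonneg : ∀ n y, 0 ≤ ψ n y) :
    ∃ Clim : Set (Rd d), IsClosed Clim ∧ Convex ℝ Clim ∧
      ∃ nk : ℕ → ℕ, StrictMono nk ∧
        ∃ ψlim : Rd d → ℝ,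
          (∀ y ∈ intrinsicInterior ℝ Clim,
            Tendsto (fun k => ψ (nk k) y) atTop (𝓝 (ψlim y))) ∧
          (∀ K : Set (Rd d), K ⊆ intrinsicInterior ℝ Clim → IsCompact K →
            TendstoUniformlyOn (fun k => ψ (nk k)) ψlim atTop K) ∧
          (∀ y ∉ Clim, Tendsto (fun k => ψ (nk k) y) atTop atTop) := by
  classical
  set Hs : Set (Rd d) := convexHull ℝ (StmtAux.anchors ψ) with hHs
  by_cases hHne : Hs.Nonempty
  case neg =>
    have hHempty : Hs = ∅ := Set.not_nonempty_iff_eq_empty.1 hHne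
    refine ⟨∅, isClosed_empty, convex_empty, StmtAux.tau1 ψ, StmtAux.tau1_strictMono ψ,
      fun _ => 0, ?_, ?_, ?_⟩
    · intro y hy; rw [intrinsicInterior_empty] at hy; exact absurd hy (Set.notMem_empty y)
    · intro K hK _
      rw [intrinsicInterior_empty, Set.subset_empty_iff] at hK
      rw [hK]
      exact tendstoUniformlyOn_empty
    · intro y _
      apply StmtAux.tau1_diverges ψ
      have : closure Hs = ∅ := by rw [hHempty, closure_empty]
      rw [hHs] at this
      rw [this]
      exact Set.notMem_empty y
  case pos =>
  obtain ⟨q, hqH, hqdense⟩ := StmtAux.exists_dense_seq hHne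
  have hqb : ∀ i, ∃ M, ∀ k, ψ (StmtAux.tau1 ψ k) (q i) ≤ M := fun i =>
    StmtAux.hull_bound (f := fun k => ψ (StmtAux.tau1 ψ k)) (fun k => hconv _)
      (fun a ha => StmtAux.anchors_bound ψ ha) (hqH i)
  set g : ℕ → ℕ → ℝ := fun k i => ψ (StmtAux.tau1 ψ k) (q i) with hgdef
  set nk : ℕ → ℕ := fun k => StmtAux.tau1 ψ (StmtAux.tau2 g k) with hnk
  have hnkmono : StrictMono nk := (StmtAux.tau1_strictMono ψ).comp (StmtAux.tau2_strictMono g)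
  set ψl : Rd d → ℝ := fun y => limUnder atTop (fun k => ψ (nk k) y) with hψl
  have hqlim : ∀ i, Tendsto (fun k => ψ (nk k) (q i)) atTop (𝓝 (ψl (q i))) := by
    intro i
    apply tendsto_nhds_limUnder
    obtain ⟨M, hM⟩ := hqb i
    obtain ⟨L, hL⟩ := StmtAux.tau2_conv g i ⟨M, fun k => ⟨hnonneg _ _, hM k⟩⟩
    exact ⟨L, hL⟩
  set C : Set (Rd d) := closure Hs with hC
  set AC := affineSpan ℝ C with hAC
  have hCspan : C ⊆ (AC : Set (Rd d)) := subset_affineSpan ℝ C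
  have hHsub : Hs ⊆ C := subset_closure
  have hHspan : ∀ z ∈ Hs, z ∈ AC := fun z hz => hCspan (hHsub hz)
  have hHb : ∀ z ∈ Hs, ∃ M, ∀ k, ψ (nk k) z ≤ M := by
    intro z hz
    obtain ⟨M, hM⟩ :=
      StmtAux.hull_bound (f := fun k => ψ (StmtAux.tau1 ψ k)) (fun k => hconv _)
        (fun a ha => StmtAux.anchors_bound ψ ha) hz
    exact ⟨M, fun k => hM _⟩
  -- the per-point local structure
  have key2 : ∀ x, x ∈ intrinsicInterior ℝ C → ∃ r L, 0 < r ∧ 0 ≤ L ∧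
      (∀ u, dist u x < r / 4 → u ∈ AC → u ∈ Hs) ∧
      (∀ u w, dist u x < r / 4 → u ∈ AC → dist w x < r / 4 → w ∈ AC →
        ∀ k, |ψ (nk k) w - ψ (nk k) u| ≤ L * dist u w) ∧
      (∀ u, dist u x < r / 4 → u ∈ AC → Tendsto (fun k => ψ (nk k) u) atTop (𝓝 (ψl u))) ∧
      (∀ u w, dist u x < r / 4 → u ∈ AC → dist w x < r / 4 → w ∈ AC →
        |ψl w - ψl u| ≤ L * dist u w) := by
    intro x hx
    have hxC : x ∈ C := intrinsicInterior_subset hx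
    have hxA : x ∈ AC := hCspan hxC
    obtain ⟨r, hr, F, hFH, hball⟩ := StmtAux.local_geom (convex_convexHull ℝ _) hx
    have hmemHs : ∀ z, dist z x < r → z ∈ AC → z ∈ Hs := by
      intro z h1 h2
      exact convexHull_min hFH (convex_convexHull ℝ _) (hball z h1 h2)
    have hFb : ∀ a ∈ (F : Set (Rd d)), ∃ M, ∀ k, ψ (nk k) a ≤ M :=
      fun a ha => hHb a (hFH ha)
    have hFne : F.Nonempty := by
      have hxF : x ∈ convexHull ℝ (F : Set (Rd d)) := hball x (by rw [dist_self]; exact hr) hxA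
      by_contra hcon
      rw [Finset.not_nonempty_iff_eq_empty.1 hcon] at hxF
      simp at hxF
    choose! Mf hMf using hFb
    set M := F.sup' hFne Mf with hM
    have hbM : ∀ k z, dist z x < r → z ∈ AC → ψ (nk k) z ≤ M := by
      intro k z h1 h2
      obtain ⟨a, haF, hfa⟩ := (hconv (nk k)).exists_ge_of_mem_convexHull
        (Set.subset_univ _) (hball z h1 h2)
      exact le_trans (le_trans hfa (hMf a haF k)) (Finset.le_sup' Mf haF)
    have hM0 : 0 ≤ M := le_trans (hnonneg (nk 0) x) (hbM 0 x (by rw [dist_self]; exact hr) hxA)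
    set L := 2 * M / r with hL
    have hL0 : 0 ≤ L := by
      rw [hL]; exact div_nonneg (by linarith) (le_of_lt hr)
    have hlip : ∀ u w, dist u x < r / 4 → u ∈ AC → dist w x < r / 4 → w ∈ AC →
        ∀ k, |ψ (nk k) w - ψ (nk k) u| ≤ L * dist u w := by
      intro u w h1 h2 h3 h4 k
      have h5 := StmtAux.convex_lip_abs (hconv (nk k)) (hnonneg (nk k)) hr hxA
        (fun z hz hzA => hbM k z hz hzA) h1 h2 h3 h4
      rw [hL]
      exact h5
    have hconvpt : ∀ u, dist u x < r / 4 → u ∈ AC →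
        ∃ a, Tendsto (fun k => ψ (nk k) u) atTop (𝓝 a) := by
      intro u h1 h2
      have huHs : u ∈ Hs := hmemHs u (by linarith) h2
      apply cauchySeq_tendsto_of_complete
      rw [Metric.cauchySeq_iff]
      intro ε hε
      set ρ := min (ε / (4 * (L + 1))) ((r / 4 - dist u x) / 2) with hρ
      have hρ0 : 0 < ρ := lt_min (by positivity) (by linarith)
      obtain ⟨b, ⟨j, rfl⟩, hbu⟩ := Metric.mem_closure_iff.1 (hqdense huHs) ρ hρ0
      have h3 : dist (q j) u < ρ := by rw [dist_comm]; exact hbu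
      have hqjx : dist (q j) x < r / 4 := by
        have h4 : ρ ≤ (r / 4 - dist u x) / 2 := min_le_right _ _
        calc dist (q j) x ≤ dist (q j) u + dist u x := dist_triangle _ _ _
          _ < ρ + dist u x := by linarith
          _ ≤ r / 4 := by linarith
      have hqjA : q j ∈ AC := hHspan _ (hqH j)
      obtain ⟨N, hN⟩ := Metric.cauchySeq_iff.1 (hqlim j).cauchySeq (ε / 2) (by linarith)
      refine ⟨N, fun m hm n hn => ?_⟩
      have e1 : |ψ (nk m) u - ψ (nk m) (q j)| ≤ L * dist (q j) u :=
        hlip (q j) u hqjx hqjA h1 h2 m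
      have e2 : |ψ (nk n) u - ψ (nk n) (q j)| ≤ L * dist (q j) u :=
        hlip (q j) u hqjx hqjA h1 h2 n
      have e3 : dist (ψ (nk m) (q j)) (ψ (nk n) (q j)) < ε / 2 := hN m hm n hn
      have hdq : L * dist (q j) u ≤ ε / 4 := by
        have h4 : ρ ≤ ε / (4 * (L + 1)) := min_le_left _ _
        have h5 : L * dist (q j) u ≤ (L + 1) * ρ := by
          nlinarith [dist_nonneg (x := q j) (y := u)]
        have h6 : (L + 1) * ρ ≤ (L + 1) * (ε / (4 * (L + 1))) :=
          mul_le_mul_of_nonneg_left h4 (by linarith)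
        have h7 : (L + 1) * (ε / (4 * (L + 1))) = ε / 4 := by
          field_simp
        linarith
      have e5 : dist (ψ (nk m) u) (ψ (nk m) (q j)) ≤ ε / 4 := by
        rw [Real.dist_eq]; linarith
      have e6 : dist (ψ (nk n) (q j)) (ψ (nk n) u) ≤ ε / 4 := by
        rw [Real.dist_eq, abs_sub_comm]; linarith
      calc dist (ψ (nk m) u) (ψ (nk n) u)
          ≤ dist (ψ (nk m) u) (ψ (nk m) (q j)) + dist (ψ (nk m) (q j)) (ψ (nk n) (q j))
            + dist (ψ (nk n) (q j)) (ψ (nk n) u) := dist_triangle4 _ _ _ _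
        _ < ε / 4 + ε / 2 + ε / 4 := by linarith
        _ = ε := by ring
    have hpt : ∀ u, dist u x < r / 4 → u ∈ AC →
        Tendsto (fun k => ψ (nk k) u) atTop (𝓝 (ψl u)) :=
      fun u h1 h2 => tendsto_nhds_limUnder (hconvpt u h1 h2)
    have hliml : ∀ u w, dist u x < r / 4 → u ∈ AC → dist w x < r / 4 → w ∈ AC →
        |ψl w - ψl u| ≤ L * dist u w := by
      intro u w h1 h2 h3 h4
      have h5 := hpt u h1 h2
      have h6 := hpt w h3 h4
      have h7 : Tendsto (fun k => |ψ (nk k) w - ψ (nk k) u|) atTop (𝓝 |ψl w - ψl u|) :=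
        (h6.sub h5).abs
      exact le_of_tendsto h7 (Filter.Eventually.of_forall fun k => hlip u w h1 h2 h3 h4 k)
    exact ⟨r, L, hr, hL0, fun u h1 h2 => hmemHs u (by linarith) h2, hlip, hpt, hliml⟩
  refine ⟨C, isClosed_closure, (convex_convexHull ℝ _).closure, nk, hnkmono, ψl, ?_, ?_, ?_⟩
  · -- pointwise convergence on the relative interior
    intro y hy
    obtain ⟨r, L, hr, hL0, hmem, hlip, hpt, hliml⟩ := key2 y hy
    exact hpt y (by rw [dist_self]; positivity) (hCspan (intrinsicInterior_subset hy))
  · -- locally uniform convergence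
    intro K hK hKc
    have hKdata := fun x (hx : x ∈ K) => key2 x (hK hx)
    choose! r L hr hL0 hmem hlip hpt hliml using hKdata
    rw [Metric.tendstoUniformlyOn_iff]
    intro ε hε
    have hpiece : ∀ x, x ∈ K → ∀ᶠ k in atTop,
        ∀ y, dist y x < r x / 8 → y ∈ AC → dist (ψl y) (ψ (nk k) y) < ε := by
      intro x hx
      have hrx : 0 < r x := hr x hx
      have hLx : 0 ≤ L x := hL0 x hx
      set ρ := min (ε / (16 * (L x + 1))) (r x / 16) with hρ
      have hρ0 : 0 < ρ := lt_min (by positivity) (by positivity)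
      obtain ⟨t, htf, htc⟩ :=
        (Metric.totallyBounded_iff.1 (isCompact_closedBall x (r x / 8)).totallyBounded) ρ hρ0
      have hsel : ∀ p : Rd d, (∃ y, (dist y x < r x / 8 ∧ y ∈ AC) ∧ dist y p < ρ) →
          ∃ j, dist (q j) p < 2 * ρ ∧ dist (q j) x < r x / 4 ∧ q j ∈ AC := by
        intro p hp
        obtain ⟨y, ⟨hy1, hy2⟩, hy3⟩ := hp
        have hyHs : y ∈ Hs := hmem x hx y (by linarith) hy2
        obtain ⟨b, ⟨j, rfl⟩, hby⟩ := Metric.mem_closure_iff.1 (hqdense hyHs) ρ hρ0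
        have hjy : dist (q j) y < ρ := by rw [dist_comm]; exact hby
        refine ⟨j, ?_, ?_, hHspan _ (hqH j)⟩
        · calc dist (q j) p ≤ dist (q j) y + dist y p := dist_triangle _ _ _
            _ < ρ + ρ := by linarith
            _ = 2 * ρ := by ring
        · have hρr : ρ ≤ r x / 16 := min_le_right _ _
          calc dist (q j) x ≤ dist (q j) y + dist y x := dist_triangle _ _ _
            _ < ρ + r x / 8 := by linarith
            _ ≤ r x / 16 + r x / 8 := by linarith
            _ < r x / 4 := by linarith
      set J : Rd d → ℕ := fun p =>
        if h : ∃ y, (dist y x < r x / 8 ∧ y ∈ AC) ∧ dist y p < ρ then (hsel p h).choose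
        else 0 with hJ
      have hev : ∀ᶠ k in atTop, ∀ p ∈ t,
          dist (ψ (nk k) (q (J p))) (ψl (q (J p))) < ε / 4 := by
        rw [Set.Finite.eventually_all htf]
        intro p hp
        exact Metric.tendsto_nhds.1 (hqlim (J p)) (ε / 4) (by linarith)
      filter_upwards [hev] with k hk
      intro y hy1 hy2
      have hyball : y ∈ Metric.closedBall x (r x / 8) := by
        rw [Metric.mem_closedBall]; exact le_of_lt hy1
      obtain ⟨p, hpt', hyp⟩ := Set.mem_iUnion₂.1 (htc hyball)
      rw [Metric.mem_ball] at hyp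
      have hcond : ∃ y', (dist y' x < r x / 8 ∧ y' ∈ AC) ∧ dist y' p < ρ :=
        ⟨y, ⟨hy1, hy2⟩, hyp⟩
      have hJeq : J p = (hsel p hcond).choose := by
        simp only [hJ]
        rw [dif_pos hcond]
      have hJ1 : dist (q (J p)) p < 2 * ρ := by rw [hJeq]; exact (hsel p hcond).choose_spec.1
      have hJ2 : dist (q (J p)) x < r x / 4 := by
        rw [hJeq]; exact (hsel p hcond).choose_spec.2.1
      have hJ3 : q (J p) ∈ AC := by rw [hJeq]; exact (hsel p hcond).choose_spec.2.2
      have hdyq : dist (q (J p)) y < 3 * ρ := by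
        calc dist (q (J p)) y ≤ dist (q (J p)) p + dist p y := dist_triangle _ _ _
          _ < 2 * ρ + ρ := by rw [dist_comm p y]; linarith
          _ = 3 * ρ := by ring
      have hy4 : dist y x < r x / 4 := by linarith
      have hL1 : |ψ (nk k) y - ψ (nk k) (q (J p))| ≤ L x * dist (q (J p)) y :=
        hlip x hx (q (J p)) y hJ2 hJ3 hy4 hy2 k
      have hL2 : |ψl y - ψl (q (J p))| ≤ L x * dist (q (J p)) y :=
        hliml x hx (q (J p)) y hJ2 hJ3 hy4 hy2
      have hρbound : L x * (3 * ρ) ≤ 3 * ε / 16 := by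
        have h4 : ρ ≤ ε / (16 * (L x + 1)) := min_le_left _ _
        have h5 : L x * (3 * ρ) ≤ (L x + 1) * (3 * ρ) := by nlinarith [hρ0]
        have h6 : (L x + 1) * (3 * ρ) ≤ (L x + 1) * (3 * (ε / (16 * (L x + 1)))) := by
          apply mul_le_mul_of_nonneg_left _ (by linarith)
          linarith
        have h7 : (L x + 1) * (3 * (ε / (16 * (L x + 1)))) = 3 * ε / 16 := by
          field_simp
        linarith
      have hLq : L x * dist (q (J p)) y ≤ 3 * ε / 16 := by
        have := mul_le_mul_of_nonneg_left (le_of_lt hdyq) hLx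
        linarith
      have hmid : dist (ψl (q (J p))) (ψ (nk k) (q (J p))) < ε / 4 := by
        rw [dist_comm]; exact hk p hpt'
      calc dist (ψl y) (ψ (nk k) y)
          ≤ dist (ψl y) (ψl (q (J p))) + dist (ψl (q (J p))) (ψ (nk k) (q (J p)))
            + dist (ψ (nk k) (q (J p))) (ψ (nk k) y) := dist_triangle4 _ _ _ _
        _ < 3 * ε / 16 + ε / 4 + 3 * ε / 16 := by
            have d1 : dist (ψl y) (ψl (q (J p))) ≤ 3 * ε / 16 := by
              rw [Real.dist_eq]; linarith
            have d3 : dist (ψ (nk k) (q (J p))) (ψ (nk k) y) ≤ 3 * ε / 16 := by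
              rw [Real.dist_eq, abs_sub_comm]; linarith
            linarith
        _ < ε := by linarith
    obtain ⟨T, hTK, hTcov⟩ := hKc.elim_nhds_subcover (fun x => Metric.ball x (r x / 8))
      (fun x hx => Metric.ball_mem_nhds x (by
        have := hr x hx; positivity))
    have hevT : ∀ᶠ k in atTop, ∀ x ∈ (↑T : Set (Rd d)),
        ∀ y, dist y x < r x / 8 → y ∈ AC → dist (ψl y) (ψ (nk k) y) < ε := by
      rw [Set.Finite.eventually_all (T.finite_toSet)]
      intro x hxT
      exact hpiece x (hTK x (Finset.mem_coe.1 hxT))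
    filter_upwards [hevT] with k hk
    intro y hyK
    obtain ⟨x, hxT, hyx⟩ := Set.mem_iUnion₂.1 (hTcov hyK)
    rw [Metric.mem_ball] at hyx
    exact hk x (Finset.mem_coe.2 hxT) y hyx (hCspan (intrinsicInterior_subset (hK hyK)))
  · -- divergence off Clim
    intro y hy
    have h1 : Tendsto (fun k => ψ (StmtAux.tau1 ψ k) y) atTop atTop :=
      StmtAux.tau1_diverges ψ hy
    exact h1.comp ((StmtAux.tau2_strictMono g).tendsto_atTop)
end
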